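/- arXiv:1604.02652 — 5 statements merged into one kernel-verified Lean document; each statement's English description precedes it below -/
import Mathlib

section
/- Let T be a junction tree on a finite vertex set V with clusters (K_t) and edge separators (S_e), and let A ⊆ V be a subset contained in at least one cluster. Then #{t : A ⊆ K_t} = #{edges e of T : A ⊆ S_e} + 1. -/
open SimpleGraph

private lemma lift_walk_reachable {ι : Type*} {T : SimpleGraph ι} {U : Set ι}
    {a b : ι} (p : T.Walk a b) (hsup : ∀ u ∈ p.support, u ∈ U)
    (ha : a ∈ U) (hb : b ∈ U) :
    (T.induce U).Reachable ⟨a, ha⟩ ⟨b, hb⟩ := by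
  induction p with
  | nil => exact Reachable.refl _
  | @cons x c y h q ih =>
    have hc : c ∈ U := hsup _ (by simp)
    have hadj : (T.induce U).Adj ⟨x, ha⟩ ⟨c, hc⟩ := h
    exact hadj.reachable.trans (ih (fun u hu => hsup u (by simp [hu])) hc hb)

/-- Let `T` be a junction tree on a finite vertex set `V` with
clusters `K t` and edge separators `S {s,t} = K s ∩ K t`, and let `A ⊆ V` be a
subset contained in at least one cluster. Then the number of clusters containing
`A` exceeds by exactly one the number of edges of `T` whose separator contains `A`. -/
theorem junctionTree_card_clusters_containing_eq_card_separators_add_one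
    {V ι : Type*} [Fintype V] [DecidableEq V] [Fintype ι] [DecidableEq ι]
    (T : SimpleGraph ι) [DecidableRel T.Adj] (hT : T.IsTree)
    (K : ι → Finset V)
    (hcov : ∀ v : V, ∃ t : ι, v ∈ K t)
    (hjun : ∀ (s t u : ι) (p : T.Walk s t), p.IsPath → u ∈ p.support →
      K s ∩ K t ⊆ K u)
    (sep : Sym2 ι → Finset V)
    (hsep : sep = Sym2.lift ⟨fun a b => K a ∩ K b, fun a b => Finset.inter_comm _ _⟩)
    (A : Finset V) (hA : ∃ t : ι, A ⊆ K t) :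
    (Finset.univ.filter fun t : ι => A ⊆ K t).card
      = (T.edgeFinset.filter fun e => A ⊆ sep e).card + 1 := by
  classical
  set U : Set ι := {t | A ⊆ K t} with hU
  let G := T.induce U
  haveI : DecidableRel G.Adj := Classical.decRel _
  have hGtree : G.IsTree := by
    constructor
    · obtain ⟨t0, ht0⟩ := hA
      haveI : Nonempty U := ⟨⟨t0, ht0⟩⟩
      refine ⟨fun a b => ?_⟩
      obtain ⟨p⟩ := hT.isConnected.preconnected a.1 b.1
      have hsup : ∀ u ∈ p.toPath.1.support, u ∈ U := by
        intro u hu x hx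
        exact hjun a.1 b.1 u p.toPath.1 p.toPath.2 hu
          (Finset.mem_inter.2 ⟨a.2 hx, b.2 hx⟩)
      have := lift_walk_reachable p.toPath.1 hsup a.2 b.2
      simpa using this
    · intro v c hc
      exact hT.IsAcyclic (c.map (Embedding.induce (G := T) U).toHom)
        (hc.map (Embedding.induce (G := T) U).injective)
  have hcard : (Finset.univ.filter fun t : ι => A ⊆ K t).card = Fintype.card U := by
    rw [← Set.toFinset_card]
    congr 1
    ext t
    simp [hU]
  have hedge : G.edgeFinset.card = (T.edgeFinset.filter fun e => A ⊆ sep e).card := by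
    apply Finset.card_bij (fun e _ => Sym2.map Subtype.val e)
    · intro e he
      induction e using Sym2.ind with
      | _ a b =>
        rw [Finset.mem_filter]
        rw [mem_edgeFinset] at he ⊢
        refine ⟨he, ?_⟩
        simp only [hsep, Sym2.map_pair_eq, Sym2.lift_mk]
        exact Finset.subset_inter a.2 b.2
    · intro e he e' he' h
      exact Sym2.map.injective Subtype.val_injective h
    · intro e he
      induction e using Sym2.ind with
      | _ a b =>
        rw [Finset.mem_filter, mem_edgeFinset] at he
        obtain ⟨hadj, hsub⟩ := he
        simp only [hsep, Sym2.lift_mk] at hsub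
        have ha : a ∈ U := fun x hx => (Finset.mem_inter.1 (hsub hx)).1
        have hb : b ∈ U := fun x hx => (Finset.mem_inter.1 (hsub hx)).2
        refine ⟨s(⟨a, ha⟩, ⟨b, hb⟩), ?_, ?_⟩
        · rw [mem_edgeFinset]
          exact hadj
        · simp
  rw [hcard, ← hedge, ← hGtree.card_edgeFinset]
end

section
/- (Pointwise algebraic form of the junction tree copula theorem.) Let T be a junction tree on a finite vertex set V with clusters (K_t) and edge separators (S_e). Let f be a real number and, for each v ∈ V, let f_v be a positive real number; for each node t let f_{K_t} and c_{K_t} be real numbers with f_{K_t} = c_{K_t} · ∏_{v ∈ K_t} f_v, and for each edge e let f_{S_e} and c_{S_e} be real numbers with f_{S_e} = c_{S_e} · ∏_{v ∈ S_e} f_v. If the junction tree factorization f · ∏_{e ∈ edges(T)} f_{S_e} = ∏_{t ∈ nodes(T)} f_{K_t} holds, then f · ∏_{e ∈ edges(T)} c_{S_e} = (∏_{t ∈ nodes(T)} c_{K_t}) · ∏_{v ∈ V} f_v. (In particular, the copula density c := f / ∏_{v∈V} f_v of a junction tree probability density factorizes over the same junction tree: c · ∏_e c_{S_e} = ∏_t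 c_{K_t}.) -/
open SimpleGraph Finset

lemma lift_reachable {ι : Type*} (T : SimpleGraph ι) (A : Set ι) :
    ∀ {s t : ι} (p : T.Walk s t) (hp : ∀ u ∈ p.support, u ∈ A),
    (T.induce A).Reachable ⟨s, hp s p.start_mem_support⟩ ⟨t, hp t p.end_mem_support⟩ := by
  intro s t p
  induction p with
  | nil => intro _; exact Reachable.refl _
  | @cons s b t h q ih =>
      intro hp
      have hb : b ∈ A := hp b (by simp)
      have hadj : (T.induce A).Adj ⟨s, hp s (by simp)⟩ ⟨b, hb⟩ := by simpa using h
      exact Reachable.trans hadj.reachable (ih fun u hu => hp u (by simp [hu]))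

lemma count_aux {V ι : Type*} [Fintype V] [DecidableEq V] [Fintype ι] [DecidableEq ι]
    (T : SimpleGraph ι) [DecidableRel T.Adj] (hT : T.IsTree)
    (K : ι → Finset V)
    (hjun : ∀ (s t u : ι) (p : T.Walk s t), p.IsPath → u ∈ p.support →
      K s ∩ K t ⊆ K u)
    (sep : Sym2 ι → Finset V)
    (hsep : sep = Sym2.lift ⟨fun a b => K a ∩ K b, fun a b => Finset.inter_comm _ _⟩)
    (v : V) (hv : ∃ t, v ∈ K t) :
    (T.edgeFinset.filter fun e => v ∈ sep e).card + 1
      = (Finset.univ.filter fun t => v ∈ K t).card := by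
  set A : Finset ι := Finset.univ.filter fun t => v ∈ K t with hA
  have hmemA : ∀ t : ι, t ∈ A ↔ v ∈ K t := by intro t; simp [hA]
  set G := T.induce (↑A : Set ι) with hG
  haveI : DecidableRel G.Adj := fun a b => by
    change Decidable (T.Adj a b); infer_instance
  haveI : Nonempty (↑A : Set ι) := by
    obtain ⟨t, ht⟩ := hv
    exact ⟨⟨t, (hmemA t).2 ht⟩⟩
  have hGtree : G.IsTree := by
    refine ⟨SimpleGraph.Connected.mk ?_, ?_⟩
    · rintro ⟨x, hx⟩ ⟨y, hy⟩
      obtain ⟨p, hp⟩ := (hT.existsUnique_path x y).exists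
      have hsup : ∀ u ∈ p.support, u ∈ (↑A : Set ι) := by
        intro u hu
        have : v ∈ K u := hjun x y u p hp hu
          (Finset.mem_inter.2 ⟨(hmemA x).1 hx, (hmemA y).1 hy⟩)
        exact (hmemA u).2 this
      exact lift_reachable T (↑A) p hsup
    · intro x c hc
      exact hT.IsAcyclic (c.map (SimpleGraph.Embedding.induce (↑A : Set ι)).toHom)
        (hc.map Subtype.val_injective)
  have hcard : G.edgeFinset.card + 1 = Fintype.card (↑A : Set ι) := hGtree.card_edgeFinset
  have hA2 : Fintype.card (↑A : Set ι) = A.card := Fintype.card_coe A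
  have hbij : G.edgeFinset.card = (T.edgeFinset.filter fun e => v ∈ sep e).card := by
    refine Finset.card_bij (fun e _ => Sym2.map Subtype.val e) ?_ ?_ ?_
    · intro e he
      induction e using Sym2.ind with
      | _ a b =>
        have hadj : G.Adj a b := SimpleGraph.mem_edgeFinset.1 he
        have hTadj : T.Adj ↑a ↑b := by simpa [hG] using hadj
        refine Finset.mem_filter.2 ⟨SimpleGraph.mem_edgeFinset.2 hTadj, ?_⟩
        simp only [Sym2.map_pair_eq, hsep, Sym2.lift_mk]
        exact Finset.mem_inter.2 ⟨(hmemA _).1 a.2, (hmemA _).1 b.2⟩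
    · intro e₁ _ e₂ _ h
      exact Sym2.map.injective Subtype.val_injective h
    · intro e he
      induction e using Sym2.ind with
      | _ a b =>
        obtain ⟨he1, he2⟩ := Finset.mem_filter.1 he
        have hTadj : T.Adj a b := SimpleGraph.mem_edgeFinset.1 he1
        have hva : v ∈ K a ∧ v ∈ K b := by
          simpa [hsep] using he2
        refine ⟨s(⟨a, (hmemA a).2 hva.1⟩, ⟨b, (hmemA b).2 hva.2⟩), ?_, ?_⟩
        · exact SimpleGraph.mem_edgeFinset.2 (by simpa [hG] using hTadj)
        · simp
  omega


/-- pointwise algebraic form of the junction tree copula theorem.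
Let `T` be a junction tree on a finite vertex set `V` with clusters `K t` and edge
separators `sep e = K s ∩ K t` for `e = s(s,t)`. Let `f : ℝ`, let `fv v > 0` for each
`v ∈ V`, and suppose each cluster/separator density splits à la Sklar into its copula
density times the product of the univariate densities:
`fK t = cK t * ∏_{v ∈ K t} fv v` and `fS e = cS e * ∏_{v ∈ sep e} fv v`.
If the junction tree factorization `f * ∏_{e} fS e = ∏_{t} fK t` holds, then
`f * ∏_{e} cS e = (∏_{t} cK t) * ∏_{v ∈ V} fv v`. -/
theorem junctionTree_copula_factorization
    {V ι : Type*} [Fintype V] [DecidableEq V] [Fintype ι] [DecidableEq ι]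
    (T : SimpleGraph ι) [DecidableRel T.Adj] (hT : T.IsTree)
    (K : ι → Finset V)
    (hcov : ∀ v : V, ∃ t : ι, v ∈ K t)
    (hjun : ∀ (s t u : ι) (p : T.Walk s t), p.IsPath → u ∈ p.support →
      K s ∩ K t ⊆ K u)
    (sep : Sym2 ι → Finset V)
    (hsep : sep = Sym2.lift ⟨fun a b => K a ∩ K b, fun a b => Finset.inter_comm _ _⟩)
    (f : ℝ) (fv : V → ℝ) (hfv : ∀ v : V, 0 < fv v)
    (fK cK : ι → ℝ) (fS cS : Sym2 ι → ℝ)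
    (hK : ∀ t : ι, fK t = cK t * ∏ v ∈ K t, fv v)
    (hS : ∀ e ∈ T.edgeFinset, fS e = cS e * ∏ v ∈ sep e, fv v)
    (hfac : f * ∏ e ∈ T.edgeFinset, fS e = ∏ t : ι, fK t) :
    f * ∏ e ∈ T.edgeFinset, cS e = (∏ t : ι, cK t) * ∏ v : V, fv v := by
  -- product over clusters as powers
  have swap : ∀ (S : Finset V), ∏ w ∈ S, fv w = ∏ w : V, if w ∈ S then fv w else 1 := by
    intro S
    rw [Finset.prod_ite_mem, Finset.univ_inter]
  have hQ : ∏ t : ι, ∏ w ∈ K t, fv w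
      = ∏ w : V, fv w ^ (Finset.univ.filter fun t => w ∈ K t).card := by
    simp_rw [swap]
    rw [Finset.prod_comm]
    refine Finset.prod_congr rfl fun w _ => ?_
    rw [Finset.prod_ite, Finset.prod_const, Finset.prod_const, one_pow, mul_one]
  have hP : ∏ e ∈ T.edgeFinset, ∏ w ∈ sep e, fv w
      = ∏ w : V, fv w ^ (T.edgeFinset.filter fun e => w ∈ sep e).card := by
    simp_rw [swap]
    rw [Finset.prod_comm]
    refine Finset.prod_congr rfl fun w _ => ?_
    rw [Finset.prod_ite, Finset.prod_const, Finset.prod_const, one_pow, mul_one]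
  have key : ∏ t : ι, ∏ w ∈ K t, fv w
      = (∏ e ∈ T.edgeFinset, ∏ w ∈ sep e, fv w) * ∏ w : V, fv w := by
    rw [hQ, hP, ← Finset.prod_mul_distrib]
    refine Finset.prod_congr rfl fun w _ => ?_
    rw [← pow_succ, count_aux T hT K hjun sep hsep w (hcov w)]
  have hPpos : 0 < ∏ e ∈ T.edgeFinset, ∏ w ∈ sep e, fv w :=
    Finset.prod_pos fun e _ => Finset.prod_pos fun w _ => hfv w
  rw [Finset.prod_congr rfl hS, Finset.prod_mul_distrib] at hfac
  simp_rw [hK] at hfac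
  rw [Finset.prod_mul_distrib, key] at hfac
  have := hfac
  apply mul_right_cancel₀ (ne_of_gt hPpos)
  ring_nf
  ring_nf at this
  linarith [this]
end

section
/- A finite family of finite sets K_1, …, K_n admits a reordering satisfying the running intersection property if and only if there exists a tree T on the index set {1, …, n} with the junction property, i.e., such that for all indices s, t and every index u on the unique path in T between s and t, K_s ∩ K_t ⊆ K_u. -/
open Classical in
/-- Auxiliary: pick the next vertex to add, one outside `l` adjacent to `l` if possible. -/
noncomputable def jtStep {n : ℕ} (T : SimpleGraph (Fin n)) (root : Fin n) (l : List (Fin n)) :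
    Fin n :=
  if l = [] then root
  else if h : ∃ w, w ∉ l ∧ ∃ u ∈ l, T.Adj u w then h.choose else root

/-- Auxiliary: the list of the first `j` vertices chosen. -/
noncomputable def jtChain {n : ℕ} (T : SimpleGraph (Fin n)) (root : Fin n) : ℕ → List (Fin n)
  | 0 => []
  | (j+1) => jtChain T root j ++ [jtStep T root (jtChain T root j)]

/-- A finite family of finite sets `K 0, …, K (n-1)` (with `n ≥ 1`)
admits a reordering satisfying the running intersection property (for every `j ≥ 1`
there is `i < j` with `K_{σ j} ∩ (K_{σ 0} ∪ … ∪ K_{σ (j-1)}) ⊆ K_{σ i}`) if and only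
if there is a tree `T` on the index set with the junction property: for all indices
`s, t` and every index `u` on the unique path in `T` between `s` and `t`,
`K s ∩ K t ⊆ K u`. -/
theorem runningIntersection_reordering_iff_junction_tree
    {α : Type*} [DecidableEq α] (n : ℕ) (hn : 1 ≤ n) (K : Fin n → Finset α) :
    (∃ σ : Equiv.Perm (Fin n), ∀ j : Fin n, 0 < (j : ℕ) →
        ∃ i : Fin n, i < j ∧
          K (σ j) ∩ (Finset.univ.filter (fun i' : Fin n => i' < j)).biUnion
              (fun i' => K (σ i'))
            ⊆ K (σ i))
    ↔ (∃ T : SimpleGraph (Fin n), T.IsTree ∧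
        ∀ (s t u : Fin n) (p : T.Walk s t), p.IsPath → u ∈ p.support →
          K s ∩ K t ⊆ K u) := by
  constructor
  · -- forward direction
    rintro ⟨σ, hσ⟩
    have h' : ∀ j : Fin n, ∃ i : Fin n, (0 < (j : ℕ) → i < j ∧
        K (σ j) ∩ (Finset.univ.filter (fun i' : Fin n => i' < j)).biUnion
          (fun i' => K (σ i')) ⊆ K (σ i)) := by
      intro j
      by_cases hj : 0 < (j : ℕ)
      · obtain ⟨i, hi⟩ := hσ j hj
        exact ⟨i, fun _ => hi⟩
      · exact ⟨j, fun c => absurd c hj⟩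
    choose par hpar using h'
    have hparlt : ∀ j : Fin n, 0 < (j : ℕ) → par j < j := fun j hj => (hpar j hj).1
    set T : SimpleGraph (Fin n) :=
      { Adj := fun a b => ∃ j : Fin n, 0 < (j : ℕ) ∧
          ((a = σ j ∧ b = σ (par j)) ∨ (b = σ j ∧ a = σ (par j)))
        symm := by
          constructor
          rintro a b ⟨j, hj, h | h⟩
          exacts [⟨j, hj, Or.inr h⟩, ⟨j, hj, Or.inl h⟩]
        loopless := by
          constructor
          rintro a ⟨j, hj, ⟨h1, h2⟩ | ⟨h1, h2⟩⟩ <;>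
          · rw [h1] at h2
            exact absurd (σ.injective h2).symm (hparlt j hj).ne } with hTdef
    have edgeMax : ∀ w z : Fin n, T.Adj w z → ((σ.symm z : Fin n) : ℕ) ≤ ((σ.symm w : Fin n) : ℕ) →
        z = σ (par (σ.symm w)) ∧ 0 < ((σ.symm w : Fin n) : ℕ) := by
      rintro w z ⟨j, hj, ⟨rfl, rfl⟩ | ⟨rfl, rfl⟩⟩ hle
      · constructor
        · simp only [Equiv.symm_apply_apply]
        · simpa using hj
      · exfalso
        simp only [Equiv.symm_apply_apply] at hle
        have := hparlt j hj
        rw [Fin.lt_def] at this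
        omega
    have peelSub : ∀ s t : Fin n, s ≠ t → ((σ.symm s : Fin n) : ℕ) ≤ ((σ.symm t : Fin n) : ℕ) →
        K s ∩ K t ⊆ K (σ (par (σ.symm t))) := by
      intro s t hst hle
      have hlt : ((σ.symm s : Fin n) : ℕ) < ((σ.symm t : Fin n) : ℕ) := by
        rcases lt_or_eq_of_le hle with h | h
        · exact h
        · exact absurd (σ.symm.injective (Fin.ext h)) (fun he => hst he)
      have hj : 0 < ((σ.symm t : Fin n) : ℕ) := by omega
      obtain ⟨-, hsub⟩ := hpar (σ.symm t) hj
      intro x hx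
      rw [Finset.mem_inter] at hx
      apply hsub
      rw [Finset.mem_inter]
      constructor
      · simpa using hx.2
      · refine Finset.mem_biUnion.mpr ⟨σ.symm s, ?_, by simpa using hx.1⟩
        simp only [Finset.mem_filter, Finset.mem_univ, true_and, Fin.lt_def]
        exact hlt
    -- the junction property, by induction on a length bound
    have junction : ∀ (N : ℕ) (s t u : Fin n) (p : T.Walk s t), p.IsPath → p.length ≤ N →
        u ∈ p.support → K s ∩ K t ⊆ K u := by
      intro N
      induction N with
      | zero =>
        intro s t u p hp hlen hu
        have hnil : p.Nil := by
          by_contra h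
          rw [SimpleGraph.Walk.not_nil_iff_lt_length] at h
          omega
        obtain rfl : s = t := hnil.eq
        rw [SimpleGraph.Walk.nil_iff_eq_nil.mp hnil] at hu
        simp only [SimpleGraph.Walk.support_nil, List.mem_singleton] at hu
        subst hu
        exact Finset.inter_subset_left
      | succ N IH =>
        intro s t u p hp hlen hu
        by_cases hnil : p.Nil
        · obtain rfl : s = t := hnil.eq
          rw [SimpleGraph.Walk.nil_iff_eq_nil.mp hnil] at hu
          simp only [SimpleGraph.Walk.support_nil, List.mem_singleton] at hu
          subst hu
          exact Finset.inter_subset_left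
        -- key: the case where t has maximal order on the path
        have key : ∀ (s t u : Fin n) (p : T.Walk s t), p.IsPath → ¬p.Nil → p.length ≤ N + 1 →
            (∀ x ∈ p.support, ((σ.symm x : Fin n) : ℕ) ≤ ((σ.symm t : Fin n) : ℕ)) →
            u ∈ p.support → K s ∩ K t ⊆ K u := by
          clear hu hlen hp hnil p u t s
          intro s t u p hp hnn hlen hmax hu
          have hnn' : ¬ p.reverse.Nil := by
            rw [SimpleGraph.Walk.not_nil_iff_lt_length, SimpleGraph.Walk.length_reverse]
            exact SimpleGraph.Walk.not_nil_iff_lt_length.mp hnn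
          obtain ⟨z, h, q, hq⟩ := SimpleGraph.Walk.not_nil_iff.mp hnn'
          have hpeq2 : p = q.reverse.concat h.symm := by
            rw [← SimpleGraph.Walk.reverse_reverse p, hq, SimpleGraph.Walk.reverse_cons,
              SimpleGraph.Walk.concat_eq_append]
          have hsupp : p.support = q.reverse.support ++ [t] := by
            rw [hpeq2, SimpleGraph.Walk.support_concat]
          have hz_mem : z ∈ p.support := by
            rw [hsupp]
            exact List.mem_append.mpr (Or.inl q.reverse.end_mem_support)
          have hz := edgeMax t z h (hmax z hz_mem)
          have hp' : q.reverse.IsPath := by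
            rw [hpeq2, SimpleGraph.Walk.concat_eq_append] at hp
            exact hp.of_append_left
          have hlen' : q.reverse.length ≤ N := by
            have := congrArg SimpleGraph.Walk.length hpeq2
            rw [SimpleGraph.Walk.length_concat] at this
            omega
          have hst : s ≠ t := by
            rintro rfl
            exact hnn (SimpleGraph.Walk.nil_iff_eq_nil.mpr
              (SimpleGraph.Walk.isPath_iff_eq_nil.mp hp))
          have hsub := peelSub s t hst (hmax s p.start_mem_support)
          intro x hx
          rcases List.mem_append.mp (hsupp ▸ hu) with hu' | hu'
          · have hxz : x ∈ K s ∩ K z := by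
              rw [Finset.mem_inter]
              refine ⟨(Finset.mem_inter.mp hx).1, ?_⟩
              rw [hz.1]
              exact hsub hx
            exact IH s z u q.reverse hp' hlen' hu' hxz
          · have : u = t := by simpa using hu'
            subst this
            exact (Finset.mem_inter.mp hx).2
        obtain ⟨w, hwmem', hwmax'⟩ := Finset.exists_max_image p.support.toFinset
          (fun x => ((σ.symm x : Fin n) : ℕ)) ⟨s, List.mem_toFinset.mpr p.start_mem_support⟩
        have hwmem : w ∈ p.support := List.mem_toFinset.mp hwmem'
        have hwmax : ∀ x ∈ p.support, ((σ.symm x : Fin n) : ℕ) ≤ ((σ.symm w : Fin n) : ℕ) :=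
          fun x hx => hwmax' x (List.mem_toFinset.mpr hx)
        by_cases hwt : w = t
        · exact key s t u p hp hnil hlen (hwt ▸ hwmax) hu
        by_cases hws : w = s
        · have hrev := key t s u p.reverse hp.reverse
            (by rw [SimpleGraph.Walk.not_nil_iff_lt_length, SimpleGraph.Walk.length_reverse]
                exact SimpleGraph.Walk.not_nil_iff_lt_length.mp hnil)
            (by rw [SimpleGraph.Walk.length_reverse]; exact hlen)
            (by intro x hx
                rw [SimpleGraph.Walk.support_reverse, List.mem_reverse] at hx
                exact hws ▸ hwmax x hx)
            (by rw [SimpleGraph.Walk.support_reverse, List.mem_reverse]; exact hu)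
          intro x hx
          exact hrev (by rwa [Finset.inter_comm])
        · exfalso
          have hq1p := hp.takeUntil hwmem
          have hq2p := hp.dropUntil hwmem
          obtain ⟨z2, h2, r2, hr2⟩ :=
            (SimpleGraph.Walk.not_nil_iff (p := p.dropUntil w hwmem)).mp
            (SimpleGraph.Walk.not_nil_of_ne (fun h => hwt h))
          have hz2mem : z2 ∈ p.support := by
            apply SimpleGraph.Walk.support_dropUntil_subset p hwmem
            rw [hr2, SimpleGraph.Walk.support_cons]
            exact List.mem_cons_of_mem _ r2.start_mem_support
          have hz2 := edgeMax w z2 h2 (hwmax z2 hz2mem)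
          obtain ⟨z1, h1, r1, hr1⟩ :=
            (SimpleGraph.Walk.not_nil_iff (p := (p.takeUntil w hwmem).reverse)).mp
            (SimpleGraph.Walk.not_nil_of_ne (fun h => hws h))
          have hz1q : z1 ∈ (p.takeUntil w hwmem).support := by
            rw [← List.mem_reverse, ← SimpleGraph.Walk.support_reverse, hr1,
              SimpleGraph.Walk.support_cons]
            exact List.mem_cons_of_mem _ r1.start_mem_support
          have hz1mem : z1 ∈ p.support :=
            SimpleGraph.Walk.support_takeUntil_subset p hwmem hz1q
          have hz1 := edgeMax w z1 h1 (hwmax z1 hz1mem)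
          have hnodup := hp.support_nodup
          have hsplit : p.support
              = (p.takeUntil w hwmem).support ++ (p.dropUntil w hwmem).support.tail := by
            conv_lhs => rw [← SimpleGraph.Walk.take_spec p hwmem]
            rw [SimpleGraph.Walk.support_append]
          rw [hsplit, List.nodup_append'] at hnodup
          have hdisj := hnodup.2.2
          have hz2q : z2 ∈ (p.dropUntil w hwmem).support.tail := by
            rw [hr2, SimpleGraph.Walk.support_cons]
            exact r2.start_mem_support
          have heq : z1 = z2 := hz1.1.trans hz2.1.symm
          exact hdisj hz1q (heq ▸ hz2q)
    -- connectivity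
    have hconn : T.Connected := by
      rw [SimpleGraph.connected_iff]
      refine ⟨?_, ⟨⟨0, hn⟩⟩⟩
      have reach : ∀ m : ℕ, ∀ hm : m < n, T.Reachable (σ ⟨m, hm⟩) (σ ⟨0, hn⟩) := by
        intro m
        induction m using Nat.strong_induction_on with
        | _ m IHm =>
          intro hm
          rcases Nat.eq_zero_or_pos m with rfl | hm0
          · exact SimpleGraph.Reachable.refl _
          · have hj : 0 < ((⟨m, hm⟩ : Fin n) : ℕ) := hm0
            have hadj : T.Adj (σ ⟨m, hm⟩) (σ (par ⟨m, hm⟩)) := ⟨⟨m, hm⟩, hj, Or.inl ⟨rfl, rfl⟩⟩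
            have hlt : ((par ⟨m, hm⟩ : Fin n) : ℕ) < m := hparlt ⟨m, hm⟩ hj
            have hrch := IHm ((par ⟨m, hm⟩ : Fin n) : ℕ) hlt (lt_trans hlt hm)
            exact hadj.reachable.trans hrch
      intro a b
      have ha := reach ((σ.symm a : Fin n) : ℕ) (σ.symm a).isLt
      have hb := reach ((σ.symm b : Fin n) : ℕ) (σ.symm b).isLt
      simp only [Fin.eta, Equiv.apply_symm_apply] at ha hb
      exact ha.trans hb.symm
    -- acyclicity
    have hacyc : T.IsAcyclic := by
      intro a c hc
      obtain ⟨w, hwmem', hwmax'⟩ := Finset.exists_max_image c.support.toFinset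
        (fun x => ((σ.symm x : Fin n) : ℕ)) ⟨a, List.mem_toFinset.mpr c.start_mem_support⟩
      have hwmem : w ∈ c.support := List.mem_toFinset.mp hwmem'
      have hwmax : ∀ x ∈ c.support, ((σ.symm x : Fin n) : ℕ) ≤ ((σ.symm w : Fin n) : ℕ) :=
        fun x hx => hwmax' x (List.mem_toFinset.mpr hx)
      have hc' : (c.rotate w hwmem).IsCycle := hc.rotate hwmem
      have hsup' : ∀ x ∈ (c.rotate w hwmem).support, x ∈ c.support := by
        intro x hx
        rw [SimpleGraph.Walk.support_eq_cons] at hx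
        rcases List.mem_cons.mp hx with rfl | hx'
        · exact hwmem
        · have := (SimpleGraph.Walk.support_rotate c w hwmem).mem_iff.mp hx'
          exact List.mem_of_mem_tail this
      have h3 := hc'.three_le_length
      obtain ⟨z, h, q, hq⟩ := SimpleGraph.Walk.not_nil_iff.mp hc'.not_nil
      rw [hq] at hc'
      rw [SimpleGraph.Walk.cons_isCycle_iff] at hc'
      obtain ⟨hqpath, hqe⟩ := hc'
      have hz_mem : z ∈ c.support := by
        apply hsup'
        rw [hq, SimpleGraph.Walk.support_cons]
        exact List.mem_cons_of_mem _ q.start_mem_support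
      have hz := edgeMax w z h (hwmax z hz_mem)
      have hlq : 2 ≤ q.length := by
        rw [hq] at h3
        simp only [SimpleGraph.Walk.length_cons] at h3
        omega
      have hzw : z ≠ w := by
        rintro rfl
        have := SimpleGraph.Walk.isPath_iff_eq_nil.mp hqpath
        rw [this] at hlq
        simp at hlq
      obtain ⟨y, h', q', hq'⟩ :=
        (SimpleGraph.Walk.not_nil_iff (p := q.reverse)).mp
        (SimpleGraph.Walk.not_nil_of_ne (fun h => hzw h.symm))
      have hy_mem : y ∈ c.support := by
        apply hsup'
        rw [hq, SimpleGraph.Walk.support_cons]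
        apply List.mem_cons_of_mem
        rw [← List.mem_reverse, ← SimpleGraph.Walk.support_reverse, hq',
          SimpleGraph.Walk.support_cons]
        exact List.mem_cons_of_mem _ q'.start_mem_support
      have hy := edgeMax w y h' (hwmax y hy_mem)
      have hyedge : s(w, y) ∈ q.edges := by
        have : s(w, y) ∈ q.reverse.edges := by
          rw [hq', SimpleGraph.Walk.edges_cons]
          exact List.mem_cons_self
        rw [SimpleGraph.Walk.edges_reverse, List.mem_reverse] at this
        exact this
      have hyz : y = z := hy.1.trans hz.1.symm
      rw [hyz] at hyedge
      exact hqe hyedge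
    refine ⟨T, ⟨hconn, hacyc⟩, ?_⟩
    intro s t u p hp hu
    exact junction p.length s t u p hp le_rfl hu
  · -- backward direction
    rintro ⟨T, hT, hJ⟩
    set root : Fin n := ⟨0, hn⟩ with hroot
    set L : ℕ → List (Fin n) := jtChain T root with hL
    set v : ℕ → Fin n := fun j => jtStep T root (L j) with hv
    have hLsucc : ∀ j, L (j+1) = L j ++ [v j] := fun j => rfl
    have hL0 : L 0 = [] := rfl
    -- crossing edge from a walk
    have hcross : ∀ (a b : Fin n) (W : T.Walk a b) (l : List (Fin n)), a ∈ l → b ∉ l →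
        ∃ w, w ∉ l ∧ ∃ u ∈ l, T.Adj u w := by
      intro a b W
      induction W with
      | nil => intro l ha hb; exact absurd ha hb
      | @cons a c b h W IH =>
        intro l ha hb
        by_cases hc : c ∈ l
        · exact IH l hc hb
        · exact ⟨c, hc, a, ha, h⟩
    have hstep : ∀ l : List (Fin n), l ≠ [] → l.length < n → l.Nodup →
        jtStep T root l ∉ l ∧ ∃ u ∈ l, T.Adj u (jtStep T root l) := by
      intro l hne hlen hnd
      have hex : ∃ w, w ∉ l ∧ ∃ u ∈ l, T.Adj u w := by
        have hcard : l.toFinset.card < n := by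
          rw [List.toFinset_card_of_nodup hnd]; exact hlen
        have hneu : l.toFinset ≠ Finset.univ := by
          intro h; rw [h] at hcard; simp at hcard
        obtain ⟨b, hb⟩ : ∃ b, b ∉ l.toFinset := by
          by_contra h'
          push_neg at h'
          exact hneu (Finset.eq_univ_iff_forall.mpr h')
        have hb' : b ∉ l := fun h => hb (List.mem_toFinset.mpr h)
        obtain ⟨a, ha⟩ := List.exists_mem_of_ne_nil l hne
        exact hcross a b (hT.1.preconnected a b).some l ha hb'
      have hstepeq : jtStep T root l = hex.choose := by
        rw [jtStep, if_neg hne, dif_pos hex]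
      rw [hstepeq]
      exact ⟨hex.choose_spec.1, hex.choose_spec.2⟩
    -- nodup and length invariant
    have hLlen : ∀ j, j ≤ n → (L j).Nodup ∧ (L j).length = j := by
      intro j
      induction j with
      | zero => intro _; exact ⟨by simp [hL0], by simp [hL0]⟩
      | succ j IHj =>
        intro hj
        obtain ⟨hnd, hlen⟩ := IHj (Nat.le_of_succ_le hj)
        have hnotmem : v j ∉ L j := by
          rcases Nat.eq_zero_or_pos j with rfl | hj0
          · simp [hL0]
          · have hne : L j ≠ [] := by
              intro h; rw [h] at hlen; simp at hlen; omega
            exact (hstep (L j) hne (by omega) hnd).1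
        refine ⟨?_, ?_⟩
        · rw [hLsucc]
          simp [List.nodup_append', hnd, hnotmem]
        · rw [hLsucc]; simp [hlen]
    have hadjprev : ∀ j, 0 < j → j < n → ∃ u ∈ L j, T.Adj u (v j) := by
      intro j hj0 hjn
      obtain ⟨hnd, hlen⟩ := hLlen j (le_of_lt hjn)
      have hne : L j ≠ [] := by
        intro h; rw [h] at hlen; simp at hlen; omega
      exact (hstep (L j) hne (by omega) hnd).2
    have hprefix : ∀ i j, i ≤ j → ∃ suf, L j = L i ++ suf := by
      intro i j hij
      induction j, hij using Nat.le_induction with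
      | base => exact ⟨[], by simp⟩
      | succ j hij IH =>
        obtain ⟨suf, hs⟩ := IH
        exact ⟨suf ++ [v j], by rw [hLsucc, hs, List.append_assoc]⟩
    have hmemL : ∀ i j, i < j → v i ∈ L j := by
      intro i j hij
      obtain ⟨suf, hs⟩ := hprefix (i+1) j hij
      rw [hs, hLsucc i]
      simp
    have hLmem : ∀ j (u : Fin n), u ∈ L j → ∃ i, i < j ∧ u = v i := by
      intro j
      induction j with
      | zero => intro u hu; rw [hL0] at hu; simp at hu
      | succ j IH =>
        intro u hu
        rw [hLsucc] at hu
        rcases List.mem_append.mp hu with h | h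
        · obtain ⟨i, hi, rfl⟩ := IH u h
          exact ⟨i, by omega, rfl⟩
        · exact ⟨j, by omega, by simpa using h⟩
    have hA : ∀ i j, i < j → j < n → v i ≠ v j := by
      intro i j hij hjn
      have hmem := hmemL i j hij
      have hnm : v j ∉ L j := by
        obtain ⟨hnd, _⟩ := hLlen (j+1) hjn
        rw [hLsucc] at hnd
        intro hmem'
        exact (List.nodup_append'.mp hnd).2.2 hmem' (List.mem_singleton.mpr rfl)
      exact fun he => hnm (he ▸ hmem)
    have hfinj : Function.Injective (fun k : Fin n => v (k : ℕ)) := by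
      intro a b hab
      by_contra hne
      rcases lt_trichotomy (a : ℕ) (b : ℕ) with h | h | h
      · exact hA _ _ h b.isLt hab
      · exact hne (Fin.ext h)
      · exact hA _ _ h a.isLt hab.symm
    refine ⟨Equiv.ofBijective _ (Finite.injective_iff_bijective.mp hfinj), ?_⟩
    set σ : Equiv.Perm (Fin n) := Equiv.ofBijective _ (Finite.injective_iff_bijective.mp hfinj)
      with hσdef
    have hσ : ∀ k : Fin n, σ k = v (k : ℕ) := fun k => rfl
    -- walks back to the root within the prefix
    have hwalk : ∀ k, k < n → ∃ W : T.Walk (v k) (v 0),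
        ∀ x ∈ W.support, ∃ i, i ≤ k ∧ x = v i := by
      intro k
      induction k using Nat.strong_induction_on with
      | _ k IH =>
        intro hk
        rcases Nat.eq_zero_or_pos k with rfl | hk0
        · exact ⟨SimpleGraph.Walk.nil, by
            intro x hx
            simp only [SimpleGraph.Walk.support_nil, List.mem_singleton] at hx
            exact ⟨0, le_rfl, hx⟩⟩
        · obtain ⟨u, hu, hadj⟩ := hadjprev k hk0 hk
          obtain ⟨i, hik, rfl⟩ := hLmem k u hu
          obtain ⟨W, hW⟩ := IH i hik (lt_trans hik hk)
          refine ⟨SimpleGraph.Walk.cons hadj.symm W, ?_⟩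
          intro x hx
          rw [SimpleGraph.Walk.support_cons] at hx
          rcases List.mem_cons.mp hx with rfl | hx'
          · exact ⟨k, le_rfl, rfl⟩
          · obtain ⟨i', hi', rfl⟩ := hW x hx'
            exact ⟨i', le_trans hi' (le_of_lt hik), rfl⟩
    intro j hj0
    obtain ⟨u, hu, hadj⟩ := hadjprev (j : ℕ) hj0 j.isLt
    obtain ⟨i0, hi0, rfl⟩ := hLmem _ u hu
    refine ⟨⟨i0, lt_trans hi0 j.isLt⟩, by simpa [Fin.lt_def] using hi0, ?_⟩
    intro x hx
    rw [Finset.mem_inter] at hx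
    obtain ⟨hxj, hxU⟩ := hx
    rw [Finset.mem_biUnion] at hxU
    obtain ⟨i', hi'f, hxi'⟩ := hxU
    have hi'lt : (i' : ℕ) < (j : ℕ) := by
      simp only [Finset.mem_filter, Finset.mem_univ, true_and, Fin.lt_def] at hi'f
      exact hi'f
    obtain ⟨W1, hW1⟩ := hwalk (i' : ℕ) i'.isLt
    obtain ⟨W2, hW2⟩ := hwalk i0 (lt_trans hi0 j.isLt)
    set W : T.Walk (v (i' : ℕ)) (v i0) := W1.append W2.reverse with hWdef
    have hWsup : ∀ y ∈ W.support, ∃ m, m < (j : ℕ) ∧ y = v m := by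
      intro y hy
      rw [hWdef, SimpleGraph.Walk.support_append] at hy
      rcases List.mem_append.mp hy with h | h
      · obtain ⟨m, hm, rfl⟩ := hW1 y h
        exact ⟨m, lt_of_le_of_lt hm hi'lt, rfl⟩
      · have h' : y ∈ W2.reverse.support := List.mem_of_mem_tail h
        rw [SimpleGraph.Walk.support_reverse, List.mem_reverse] at h'
        obtain ⟨m, hm, rfl⟩ := hW2 y h'
        exact ⟨m, lt_of_le_of_lt hm hi0, rfl⟩
    set q : T.Walk (v (i' : ℕ)) (v i0) := W.toPath.val with hqdef
    have hqpath : q.IsPath := W.toPath.2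
    have hqsub : ∀ y ∈ q.support, ∃ m, m < (j : ℕ) ∧ y = v m := fun y hy =>
      hWsup y (SimpleGraph.Walk.support_toPath_subset W hy)
    have hjq : v (j : ℕ) ∉ q.support := by
      intro h
      obtain ⟨m, hm, hveq⟩ := hqsub _ h
      exact hA m (j : ℕ) hm j.isLt hveq.symm
    have hadj' : T.Adj (v (j : ℕ)) (v i0) := hadj.symm
    set p : T.Walk (v (i' : ℕ)) (v (j : ℕ)) :=
      (SimpleGraph.Walk.cons hadj' q.reverse).reverse with hpdef
    have hppath : p.IsPath := by
      apply SimpleGraph.Walk.IsPath.reverse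
      apply SimpleGraph.Walk.IsPath.cons hqpath.reverse
      rw [SimpleGraph.Walk.support_reverse, List.mem_reverse]
      exact hjq
    have hup : v i0 ∈ p.support := by
      rw [hpdef, SimpleGraph.Walk.support_reverse, List.mem_reverse,
        SimpleGraph.Walk.support_cons]
      exact List.mem_cons_of_mem _ q.reverse.start_mem_support
    have hmain := hJ (v (i' : ℕ)) (v (j : ℕ)) (v i0) p hppath hup
    have hx' : x ∈ K (v (i' : ℕ)) ∩ K (v (j : ℕ)) :=
      Finset.mem_inter.mpr ⟨hxi', hxj⟩
    exact hmain hx'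
end

section
/- (Structural core of the transformation of a k-width junction tree into a k-th order cherry tree.) Let T be a junction tree on a finite vertex set V in which every cluster has at most k elements, and suppose |V| ≥ k. Then there exists a k-th order cherry tree T' on V such that every cluster of T is contained in some cluster of T'. -/
/-- A junction tree on a finite vertex set `V`: a finite tree `tree` on a node set
`ι`, with a cluster `K t ⊆ V` at each node, such that the clusters cover `V` and
the junction property holds: for any nodes `s, t` and any node `u` on the (unique)
path between `s` and `t`, `K s ∩ K t ⊆ K u`. -/
structure JunctionTree (V : Type) [DecidableEq V] where
  ι : Type
  fin : Fintype ι
  tree : SimpleGraph ι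
  isTree : tree.IsTree
  K : ι → Finset V
  covers : ∀ v : V, ∃ t : ι, v ∈ K t
  junction : ∀ (s t u : ι) (p : tree.Walk s t), p.IsPath → u ∈ p.support →
    K s ∩ K t ⊆ K u

/-- The separator of an edge `{s, t}` of a junction tree is `K s ∩ K t`. -/
def JunctionTree.sep {V : Type} [DecidableEq V] (J : JunctionTree V) :
    Sym2 J.ι → Finset V :=
  Sym2.lift ⟨fun a b => J.K a ∩ J.K b, fun a b => Finset.inter_comm _ _⟩

/-- A `k`-th order cherry tree: a junction tree in which every cluster has exactly
`k` elements and the separator of every edge has exactly `k - 1` elements. -/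
def JunctionTree.IsCherry {V : Type} [DecidableEq V] (J : JunctionTree V)
    (k : ℕ) : Prop :=
  (∀ t : J.ι, (J.K t).card = k) ∧ ∀ e ∈ J.tree.edgeSet, (J.sep e).card = k - 1



structure PreCherry (V : Type) [DecidableEq V] (k : ℕ) where
  N : ℕ
  C : ℕ → Finset V
  par : ℕ → ℕ
  card_eq : ∀ a, a ≤ N → (C a).card = k
  par_lt : ∀ a, 0 < a → a ≤ N → par a < a
  glue : ∀ a, 0 < a → a ≤ N →
    ∃ u ∈ C a, (C a).erase u ⊆ C (par a) ∧ ∀ b, b < a → u ∉ C b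

namespace PreCherry

variable {V : Type} [DecidableEq V] {k : ℕ}

lemma rip (S : PreCherry V k) {a b : ℕ} (hb : b < a) (ha : a ≤ S.N) :
    S.C b ∩ S.C a ⊆ S.C (S.par a) := by
  obtain ⟨u, huC, hsub, hfresh⟩ := S.glue a (lt_of_le_of_lt (Nat.zero_le b) hb) ha
  intro v hv
  rw [Finset.mem_inter] at hv
  have hvu : v ≠ u := by
    rintro rfl
    exact hfresh b hb hv.1
  exact hsub (Finset.mem_erase.mpr ⟨hvu, hv.2⟩)

lemma extend (F : Finset V) :
    ∀ (S : PreCherry V k) (b : ℕ), b ≤ S.N → ∀ P : Finset V, P ⊆ S.C b →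
    P.card + F.card ≤ k →
    (∀ u ∈ F, ∀ a, a ≤ S.N → u ∉ S.C a) →
    ∃ S' : PreCherry V k, S.N ≤ S'.N ∧ (∀ a, a ≤ S.N → S'.C a = S.C a) ∧
      (∃ a, a ≤ S'.N ∧ P ∪ F ⊆ S'.C a) ∧
      (∀ a, S.N < a → a ≤ S'.N → S'.C a ⊆ S.C b ∪ F) := by
  induction F using Finset.induction with
  | empty =>
    intro S b hb P hP _ _
    exact ⟨S, le_refl _, fun _ _ => rfl, ⟨b, hb, by simpa using hP⟩,
      fun a h1 h2 => absurd (lt_of_lt_of_le h1 h2) (lt_irrefl _)⟩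
  | @insert u F₀ hu ih =>
    intro S b hb P hP hcard hF
    rw [Finset.card_insert_of_notMem hu] at hcard
    have hk1 : 1 ≤ k := by omega
    have hPk : P.card ≤ k - 1 := by omega
    obtain ⟨Q, hPQ, hQC, hQcard⟩ :=
      Finset.exists_subsuperset_card_eq hP hPk (by rw [S.card_eq b hb]; omega)
    have hufresh : ∀ a, a ≤ S.N → u ∉ S.C a := hF u (Finset.mem_insert_self u F₀)
    have huQ : u ∉ Q := fun h => hufresh b hb (hQC h)
    have hbne : b ≠ S.N + 1 := by omega
    set C₁ : ℕ → Finset V := fun a => if a = S.N + 1 then insert u Q else S.C a with hC₁def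
    set par₁ : ℕ → ℕ := fun a => if a = S.N + 1 then b else S.par a with hpar₁def
    have hC₁top : C₁ (S.N + 1) = insert u Q := if_pos rfl
    have hC₁old : ∀ a, a ≠ S.N + 1 → C₁ a = S.C a := fun a h => if_neg h
    have hpar₁top : par₁ (S.N + 1) = b := if_pos rfl
    have hpar₁old : ∀ a, a ≠ S.N + 1 → par₁ a = S.par a := fun a h => if_neg h
    have hcardtop : (C₁ (S.N + 1)).card = k := by
      rw [hC₁top, Finset.card_insert_of_notMem huQ, hQcard]; omega
    set S₁ : PreCherry V k :=
      { N := S.N + 1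
        C := C₁
        par := par₁
        card_eq := by
          intro a ha
          rcases eq_or_ne a (S.N + 1) with h | h
          · rw [h]; exact hcardtop
          · rw [hC₁old a h]; exact S.card_eq a (by omega)
        par_lt := by
          intro a ha0 ha
          rcases eq_or_ne a (S.N + 1) with h | h
          · rw [h, hpar₁top]; omega
          · rw [hpar₁old a h]; exact S.par_lt a ha0 (by omega)
        glue := by
          intro a ha0 ha
          rcases eq_or_ne a (S.N + 1) with h | h
          · subst h
            refine ⟨u, ?_, ?_, ?_⟩
            · rw [hC₁top]; exact Finset.mem_insert_self u Q
            · rw [hC₁top, Finset.erase_insert huQ, hpar₁top, hC₁old b hbne]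
              exact hQC
            · intro b' hb'
              rw [hC₁old b' (by omega)]
              exact hufresh b' (by omega)
          · have ha' : a ≤ S.N := by omega
            obtain ⟨u', hu'C, hu'sub, hu'fresh⟩ := S.glue a ha0 ha'
            have hpar : S.par a < a := S.par_lt a ha0 ha'
            refine ⟨u', ?_, ?_, ?_⟩
            · rw [hC₁old a h]; exact hu'C
            · rw [hC₁old a h, hpar₁old a h, hC₁old (S.par a) (by omega)]
              exact hu'sub
            · intro b' hb'
              rw [hC₁old b' (by omega)]
              exact hu'fresh b' hb' } with hS₁def
    have hS₁N : S₁.N = S.N + 1 := rfl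
    have hS₁C : S₁.C = C₁ := rfl
    have hinsP : (insert u P).card ≤ P.card + 1 := Finset.card_insert_le u P
    have hstep := ih S₁ (S.N + 1) (le_of_eq hS₁N.symm) (insert u P)
      (by rw [hS₁C, hC₁top]; exact Finset.insert_subset_insert u hPQ)
      (by omega)
      (by
        intro x hx a ha
        rw [hS₁C]
        rcases eq_or_ne a (S.N + 1) with h | h
        · subst h
          rw [hC₁top]
          intro hmem
          rcases Finset.mem_insert.mp hmem with h1 | h1
          · subst h1; exact hu hx
          · exact hF x (Finset.mem_insert_of_mem hx) b hb (hQC h1)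
        · rw [hC₁old a h]
          exact hF x (Finset.mem_insert_of_mem hx) a (by rw [hS₁N] at ha; omega))
    obtain ⟨S', hNle, hpres, ⟨a0, ha0, hsub0⟩, hcontent⟩ := hstep
    rw [hS₁N] at hNle hcontent hpres
    rw [hS₁C] at hpres hcontent
    refine ⟨S', by omega, ?_, ⟨a0, ha0, ?_⟩, ?_⟩
    · intro a ha
      rw [hpres a (by omega), hC₁old a (by omega)]
    · intro x hx
      apply hsub0
      rcases Finset.mem_union.mp hx with h1 | h1
      · exact Finset.mem_union_left _ (Finset.mem_insert_of_mem h1)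
      · rcases Finset.mem_insert.mp h1 with h2 | h2
        · exact Finset.mem_union_left _ (by simp [h2])
        · exact Finset.mem_union_right _ h2
    · intro a ha1 ha2
      rcases eq_or_ne a (S.N + 1) with h | h
      · subst h
        rw [hpres _ (le_refl _), hC₁top]
        intro x hx
        rcases Finset.mem_insert.mp hx with h1 | h1
        · exact Finset.mem_union_right _ (by simp [h1])
        · exact Finset.mem_union_left _ (hQC h1)
      · have := hcontent a (by omega) ha2
        refine this.trans ?_
        rw [hC₁top]
        intro x hx
        rcases Finset.mem_union.mp hx with h1 | h1
        · rcases Finset.mem_insert.mp h1 with h2 | h2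
          · exact Finset.mem_union_right _ (by simp [h2])
          · exact Finset.mem_union_left _ (hQC h2)
        · exact Finset.mem_union_right _ (Finset.mem_insert_of_mem h1)

end PreCherry

lemma exists_downclosed {V : Type} [Fintype V] [DecidableEq V] (f : V → ℕ) :
    ∀ j, j ≤ Fintype.card V → ∃ R : Finset V, R.card = j ∧
      ∀ u ∈ R, ∀ v, f v < f u → v ∈ R := by
  intro j
  induction j with
  | zero => exact fun _ => ⟨∅, Finset.card_empty, by simp⟩
  | succ j ih =>
    intro hj
    obtain ⟨R, hRcard, hRcl⟩ := ih (by omega)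
    have hne : (Finset.univ \ R).Nonempty := by
      rw [← Finset.card_pos, Finset.card_sdiff_of_subset (Finset.subset_univ R),
        Finset.card_univ, hRcard]
      omega
    obtain ⟨u, hu, humin⟩ := Finset.exists_min_image (Finset.univ \ R) f hne
    have huR : u ∉ R := (Finset.mem_sdiff.mp hu).2
    refine ⟨insert u R, by rw [Finset.card_insert_of_notMem huR, hRcard], ?_⟩
    intro w hw v hv
    rcases Finset.mem_insert.mp hw with h | h
    · subst h
      by_cases hvR : v ∈ R
      · exact Finset.mem_insert_of_mem hvR
      · have := humin v (Finset.mem_sdiff.mpr ⟨Finset.mem_univ v, hvR⟩)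
        omega
    · exact Finset.mem_insert_of_mem (hRcl w h v hv)

lemma exists_preCherry {V : Type} [Fintype V] [DecidableEq V] (k m : ℕ)
    (A : ℕ → Finset V) (pr : ℕ → ℕ)
    (hk : k ≤ Fintype.card V)
    (hpr : ∀ i, 0 < i → i < m → pr i < i)
    (hcard : ∀ i, i < m → (A i).card ≤ k)
    (hrip : ∀ i, i < m → ∀ j, j < i → A j ∩ A i ⊆ A (pr i))
    (hcov : ∀ v : V, ∃ i, i < m ∧ v ∈ A i) :
    ∃ S : PreCherry V k, (∀ i, i < m → ∃ a, a ≤ S.N ∧ A i ⊆ S.C a) ∧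
      (∀ v : V, ∃ a, a ≤ S.N ∧ v ∈ S.C a) := by
  classical
  -- the "first index" function
  have hTne : ∀ v : V, ((Finset.range m).filter (fun i => v ∈ A i)).Nonempty := by
    intro v
    obtain ⟨i, him, hvi⟩ := hcov v
    exact ⟨i, Finset.mem_filter.mpr ⟨Finset.mem_range.mpr him, hvi⟩⟩
  set f : V → ℕ := fun v => ((Finset.range m).filter (fun i => v ∈ A i)).min' (hTne v)
    with hfdef
  have hfmem : ∀ v, f v < m ∧ v ∈ A (f v) := by
    intro v
    have := Finset.min'_mem _ (hTne v)
    rw [Finset.mem_filter, Finset.mem_range] at this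
    exact this
  have hfle : ∀ v i, i < m → v ∈ A i → f v ≤ i := by
    intro v i him hvi
    exact Finset.min'_le _ i (Finset.mem_filter.mpr ⟨Finset.mem_range.mpr him, hvi⟩)
  obtain ⟨R, hRcard, hRcl⟩ := exists_downclosed f k hk
  have main : ∀ i, i ≤ m → ∃ S : PreCherry V k, S.C 0 = R ∧
      (∀ a, a ≤ S.N → S.C a ⊆ R ∪ (Finset.range i).biUnion A) ∧
      (∀ j, j < i → ∃ a, a ≤ S.N ∧ A j ⊆ S.C a) := by
    intro i
    induction i with
    | zero =>
      intro _
      refine ⟨⟨0, fun _ => R, fun _ => 0, fun a _ => hRcard, ?_, ?_⟩, rfl, ?_, ?_⟩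
      · intro a h1 h2; omega
      · intro a h1 h2; omega
      · intro a _; exact Finset.subset_union_left
      · intro j hj; omega
    | succ i ih =>
      intro hi
      obtain ⟨S, hS0, hSinv, hShomes⟩ := ih (by omega)
      have him : i < m := by omega
      set W : Finset V := R ∪ (Finset.range i).biUnion A with hWdef
      set F : Finset V := A i \ W with hFdef
      set P : Finset V := A i ∩ W with hPdef
      have hfreshF : ∀ u ∈ F, ∀ a, a ≤ S.N → u ∉ S.C a := by
        intro u huF a ha hmem
        exact (Finset.mem_sdiff.mp huF).2 (hSinv a ha hmem)
      have hcardPF : P.card + F.card ≤ k :=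
        le_trans (le_of_eq (Finset.card_inter_add_card_sdiff (A i) W)) (hcard i him)
      -- find base cluster
      have hbase : ∃ b, b ≤ S.N ∧ P ⊆ S.C b := by
        by_cases hcase : ∃ u, u ∈ A i ∧ u ∉ (Finset.range i).biUnion A ∧ u ∈ R
        · obtain ⟨u, huA, huB, huR⟩ := hcase
          have hfu : f u = i := by
            have h1 : f u ≤ i := hfle u i him huA
            rcases Nat.lt_or_ge (f u) i with h2 | h2
            · exfalso
              exact huB (Finset.mem_biUnion.mpr
                ⟨f u, Finset.mem_range.mpr h2, (hfmem u).2⟩)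
            · omega
          refine ⟨0, Nat.zero_le _, ?_⟩
          rw [hS0]
          intro v hv
          rw [hPdef, Finset.mem_inter] at hv
          rcases Finset.mem_union.mp hv.2 with h | h
          · exact h
          · obtain ⟨j, hjr, hvj⟩ := Finset.mem_biUnion.mp h
            have hjlt : j < i := Finset.mem_range.mp hjr
            have hfvj : f v ≤ j := hfle v j (by omega) hvj
            exact hRcl u huR v (by omega)
        · rcases Nat.eq_zero_or_pos i with hi0 | hi0
          · refine ⟨0, Nat.zero_le _, ?_⟩
            rw [hS0]
            intro v hv
            rw [hPdef, Finset.mem_inter] at hv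
            rcases Finset.mem_union.mp hv.2 with h | h
            · exfalso
              refine hcase ⟨v, hv.1, ?_, h⟩
              subst hi0
              simp
            · exfalso
              obtain ⟨j, hjr, _⟩ := Finset.mem_biUnion.mp h
              rw [Finset.mem_range] at hjr
              omega
          · obtain ⟨a', ha', hsub'⟩ := hShomes (pr i) (hpr i hi0 him)
            refine ⟨a', ha', ?_⟩
            intro v hv
            rw [hPdef, Finset.mem_inter] at hv
            have hvB : v ∈ (Finset.range i).biUnion A := by
              rcases Finset.mem_union.mp hv.2 with h | h
              · by_contra hc
                exact hcase ⟨v, hv.1, hc, h⟩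
              · exact h
            obtain ⟨j, hjr, hvj⟩ := Finset.mem_biUnion.mp hvB
            exact hsub' (hrip i him j (Finset.mem_range.mp hjr)
              (Finset.mem_inter.mpr ⟨hvj, hv.1⟩))
      obtain ⟨b, hb, hPb⟩ := hbase
      obtain ⟨S', hNle, hpres, ⟨a0, ha0, hsub0⟩, hcontent⟩ :=
        PreCherry.extend F S b hb P hPb hcardPF hfreshF
      have hPF : P ∪ F = A i := by
        rw [hPdef, hFdef]
        ext x
        simp only [Finset.mem_union, Finset.mem_inter, Finset.mem_sdiff]
        tauto
      have hAW : A i ⊆ R ∪ (Finset.range (i + 1)).biUnion A := by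
        intro x hx
        exact Finset.mem_union_right _ (Finset.mem_biUnion.mpr
          ⟨i, Finset.mem_range.mpr (by omega), hx⟩)
      have hWmono : R ∪ (Finset.range i).biUnion A ⊆
          R ∪ (Finset.range (i + 1)).biUnion A := by
        apply Finset.union_subset_union_right
        apply Finset.biUnion_subset_biUnion_of_subset_left
        exact Finset.range_subset_range.mpr (by omega)
      refine ⟨S', ?_, ?_, ?_⟩
      · rw [hpres 0 (Nat.zero_le _), hS0]
      · intro a ha
        rcases Nat.lt_or_ge S.N a with h | h
        · refine (hcontent a h ha).trans ?_
          apply Finset.union_subset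
          · exact (hSinv b hb).trans hWmono
          · exact (Finset.sdiff_subset).trans hAW
        · rw [hpres a h]
          exact (hSinv a h).trans hWmono
      · intro j hj
        rcases Nat.lt_or_ge j i with h | h
        · obtain ⟨a, ha, hsub⟩ := hShomes j h
          exact ⟨a, le_trans ha hNle, by rw [hpres a ha]; exact hsub⟩
        · have : j = i := by omega
          subst this
          exact ⟨a0, ha0, by rw [← hPF]; exact hsub0⟩
  obtain ⟨S, _, _, hhomes⟩ := main m (le_refl m)
  refine ⟨S, hhomes, ?_⟩
  intro v
  obtain ⟨i, him, hvi⟩ := hcov v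
  obtain ⟨a, ha, hsub⟩ := hhomes i him
  exact ⟨a, ha, hsub hvi⟩

open SimpleGraph in
lemma parent_acyclic {n : ℕ} (p : Fin (n + 1) → Fin (n + 1)) (hp0 : p 0 = 0)
    (hplt : ∀ a : Fin (n + 1), a ≠ 0 → (p a : ℕ) < a) :
    (SimpleGraph.fromRel fun a b => p a = b).IsAcyclic := by
  have adjdec : ∀ {a b : Fin (n + 1)},
      (SimpleGraph.fromRel fun a b => p a = b).Adj a b → b < a → p a = b := by
    intro a b hab hba
    rw [Fin.lt_def] at hba
    rcases (SimpleGraph.fromRel_adj _ a b).mp hab with ⟨hne, h | h⟩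
    · exact h
    · exfalso
      rcases eq_or_ne b 0 with rfl | hb0
      · rw [hp0] at h
        have : (a : ℕ) = 0 := by rw [← h]; simp
        omega
      · have h1 := hplt b hb0
        rw [h] at h1
        omega
  intro v c hc
  have hTne : c.support.toFinset.Nonempty := ⟨v, by simp [c.start_mem_support]⟩
  set M := c.support.toFinset.max' hTne with hMdef
  have hM : M ∈ c.support := by
    have := c.support.toFinset.max'_mem hTne
    rwa [List.mem_toFinset] at this
  have hbound : ∀ x ∈ (c.rotate M hM).support, x ≤ M := by
    intro x hx
    rw [SimpleGraph.Walk.support_eq_cons] at hx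
    rcases hx with _ | hx
    · exact le_refl M
    · rename_i hx
      have hx' : x ∈ c.support.tail :=
        ((SimpleGraph.Walk.support_rotate c M hM).perm.mem_iff).mp hx
      exact c.support.toFinset.le_max' x
        (List.mem_toFinset.mpr (List.mem_of_mem_tail hx'))
  have hd := hc.rotate hM
  revert hd hbound
  generalize c.rotate M hM = d
  intro hbound hd
  cases d with
  | nil => exact hd.ne_nil rfl
  | @cons _ x _ h₁ q =>
    have hxM : x ≠ M := h₁.ne'
    have hqnodup : q.support.Nodup := by
      have := hd.support_nodup
      rwa [SimpleGraph.Walk.support_cons] at this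
    obtain ⟨y, h₂, q₂, hq2⟩ := SimpleGraph.Walk.exists_eq_cons_of_ne h₁.ne q.reverse
    have hy_mem_q : y ∈ q.support := by
      have : y ∈ q.reverse.support := by
        rw [hq2, SimpleGraph.Walk.support_cons]
        exact List.mem_cons_of_mem _ q₂.start_mem_support
      rwa [SimpleGraph.Walk.support_reverse, List.mem_reverse] at this
    have hxsup : x ∈ q.support := q.start_mem_support
    have hxlt : x < M := lt_of_le_of_ne
      (hbound x (by rw [SimpleGraph.Walk.support_cons]; exact List.mem_cons_of_mem _ hxsup)) hxM
    have hylt : y < M := lt_of_le_of_ne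
      (hbound y (by rw [SimpleGraph.Walk.support_cons]; exact List.mem_cons_of_mem _ hy_mem_q))
      h₂.ne'
    have hpx : p M = x := adjdec h₁ hxlt
    have hpy : p M = y := adjdec h₂ hylt
    have hxy : x = y := by rw [← hpx, hpy]
    subst hxy
    -- length facts
    have hlen3 := hd.three_le_length
    have hqlen : 2 ≤ q.length := by
      rw [SimpleGraph.Walk.length_cons] at hlen3
      omega
    have hq2len : 1 ≤ q₂.length := by
      have := congrArg SimpleGraph.Walk.length hq2
      rw [SimpleGraph.Walk.length_reverse, SimpleGraph.Walk.length_cons] at this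
      omega
    have hq2nodup : q₂.support.Nodup := by
      have h1 : q.reverse.support.Nodup := by
        rw [SimpleGraph.Walk.support_reverse, List.nodup_reverse]
        exact hqnodup
      rw [hq2, SimpleGraph.Walk.support_cons] at h1
      exact h1.of_cons
    cases q₂ with
    | nil => simp at hq2len
    | @cons _ z _ h₃ q₃ =>
      rw [SimpleGraph.Walk.support_cons] at hq2nodup
      exact (List.nodup_cons.mp hq2nodup).1 q₃.end_mem_support

lemma preCherry_to_junction {V : Type} [Fintype V] [DecidableEq V] {k : ℕ}
    (S : PreCherry V k) (hcov : ∀ v : V, ∃ a, a ≤ S.N ∧ v ∈ S.C a) :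
    ∃ J' : JunctionTree V, J'.IsCherry k ∧
      ∀ a, a ≤ S.N → ∃ t' : J'.ι, S.C a ⊆ J'.K t' := by
  classical
  set n := S.N with hn
  have hparlt : ∀ a : Fin (n + 1), (a : ℕ) ≠ 0 → S.par a < (a : ℕ) :=
    fun a h => S.par_lt a (Nat.pos_of_ne_zero h) (Nat.le_of_lt_succ a.isLt)
  set p : Fin (n + 1) → Fin (n + 1) := fun a =>
    if h : (a : ℕ) = 0 then a
    else ⟨S.par a, lt_trans (hparlt a h) a.isLt⟩ with hpdef
  have hvne : ∀ a : Fin (n + 1), a ≠ 0 → (a : ℕ) ≠ 0 := by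
    intro a ha h
    exact ha (Fin.ext (by simp [h]))
  have hp0 : p 0 = 0 := by simp [hpdef]
  have hpval : ∀ a : Fin (n + 1), a ≠ 0 → (p a : ℕ) = S.par a := by
    intro a ha
    simp [hpdef, dif_neg (hvne a ha), ha]
  have hplt : ∀ a : Fin (n + 1), a ≠ 0 → (p a : ℕ) < a := by
    intro a ha
    rw [hpval a ha]
    exact hparlt a (hvne a ha)
  set G : SimpleGraph (Fin (n + 1)) := SimpleGraph.fromRel fun a b => p a = b with hGdef
  have hadj : ∀ a : Fin (n + 1), a ≠ 0 → G.Adj a (p a) := by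
    intro a ha
    rw [hGdef, SimpleGraph.fromRel_adj]
    refine ⟨?_, Or.inl rfl⟩
    intro h
    have h2 := hplt a ha
    rw [← h] at h2
    omega
  have hacyc : G.IsAcyclic := parent_acyclic p hp0 hplt
  have hreach : ∀ (q : ℕ) (a : Fin (n + 1)), (a : ℕ) ≤ q → G.Reachable a 0 := by
    intro q
    induction q with
    | zero =>
      intro a ha
      have : a = 0 := Fin.ext (by simpa using ha)
      rw [this]
    | succ q ih =>
      intro a ha
      rcases eq_or_ne a 0 with rfl | h
      · rfl
      · exact ((hadj a h).reachable).trans (ih (p a) (by have := hplt a h; omega))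
  have hconn : G.Connected :=
    SimpleGraph.Connected.mk fun a b =>
      (hreach n a (Nat.le_of_lt_succ a.isLt)).trans
        (hreach n b (Nat.le_of_lt_succ b.isLt)).symm
  -- RIP in Fin terms
  have hfrip : ∀ (v : V) (a b : Fin (n + 1)), b < a → v ∈ S.C (b : ℕ) →
      v ∈ S.C (a : ℕ) → v ∈ S.C ((p a : Fin (n + 1)) : ℕ) := by
    intro v a b hba hvb hva
    rw [Fin.lt_def] at hba
    have ha0 : a ≠ 0 := by
      intro h
      rw [h] at hba
      simp at hba
    rw [hpval a ha0]
    exact S.rip hba (Nat.le_of_lt_succ a.isLt) (Finset.mem_inter.mpr ⟨hvb, hva⟩)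
  -- walks towards the minimal cluster containing a vertex
  have hjunction : ∀ (s t u : Fin (n + 1)) (pth : G.Walk s t), pth.IsPath →
      u ∈ pth.support → S.C (s : ℕ) ∩ S.C (t : ℕ) ⊆ S.C (u : ℕ) := by
    intro s t u pth hpth hu v hv
    rw [Finset.mem_inter] at hv
    obtain ⟨hvs, hvt⟩ := hv
    set Tv : Finset (Fin (n + 1)) := Finset.univ.filter (fun a => v ∈ S.C (a : ℕ))
      with hTvdef
    have hTvne : Tv.Nonempty := ⟨s, by simp [hTvdef, hvs]⟩
    set μ := Tv.min' hTvne with hμdef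
    have hμmem : v ∈ S.C (μ : ℕ) := (Finset.mem_filter.mp (Tv.min'_mem hTvne)).2
    have key : ∀ (q : ℕ) (a : Fin (n + 1)), (a : ℕ) ≤ q → v ∈ S.C (a : ℕ) →
        ∃ w : G.Walk a μ, ∀ x ∈ w.support, v ∈ S.C (x : ℕ) := by
      intro q
      induction q with
      | zero =>
        intro a ha hva
        have haμ : a = μ := by
          have h1 : μ ≤ a := Tv.min'_le a (by simp [hTvdef, hva])
          have h2 : (a : ℕ) = 0 := by omega
          refine le_antisymm ?_ h1
          rw [Fin.le_def]
          omega
        subst haμ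
        refine ⟨SimpleGraph.Walk.nil, ?_⟩
        intro x hx
        rw [SimpleGraph.Walk.support_nil, List.mem_singleton] at hx
        subst hx
        exact hva
      | succ q ih =>
        intro a ha hva
        rcases eq_or_ne a μ with rfl | hne
        · refine ⟨SimpleGraph.Walk.nil, ?_⟩
          intro x hx
          rw [SimpleGraph.Walk.support_nil, List.mem_singleton] at hx
          subst hx
          exact hva
        · have hμa : μ < a :=
            lt_of_le_of_ne (Tv.min'_le a (by simp [hTvdef, hva])) (Ne.symm hne)
          have ha0 : a ≠ 0 := by
            intro h
            rw [h] at hμa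
            exact absurd hμa (by simp [Fin.lt_def])
          have hvp : v ∈ S.C ((p a : Fin (n + 1)) : ℕ) := hfrip v a μ hμa hμmem hva
          obtain ⟨w', hw'⟩ := ih (p a) (by have := hplt a ha0; omega) hvp
          refine ⟨SimpleGraph.Walk.cons (hadj a ha0) w', ?_⟩
          intro x hx
          rw [SimpleGraph.Walk.support_cons] at hx
          rcases hx with _ | hx
          · exact hva
          · exact hw' x (by assumption)
    obtain ⟨ws, hws⟩ := key n s (Nat.le_of_lt_succ s.isLt) hvs
    obtain ⟨wt, hwt⟩ := key n t (Nat.le_of_lt_succ t.isLt) hvt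
    set Wk := ws.append wt.reverse with hWkdef
    have hWall : ∀ x ∈ Wk.support, v ∈ S.C (x : ℕ) := by
      intro x hx
      rw [hWkdef, SimpleGraph.Walk.mem_support_append_iff] at hx
      rcases hx with hx | hx
      · exact hws x hx
      · rw [SimpleGraph.Walk.support_reverse, List.mem_reverse] at hx
        exact hwt x hx
    have huniq : pth = Wk.bypass := by
      have h2 := hacyc.path_unique ⟨pth, hpth⟩ ⟨Wk.bypass, Wk.bypass_isPath⟩
      exact Subtype.ext_iff.mp h2
    have : u ∈ Wk.support :=
      SimpleGraph.Walk.support_bypass_subset Wk (huniq ▸ hu)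
    exact hWall u this
  -- assemble the junction tree
  refine ⟨{ ι := Fin (n + 1), fin := inferInstance, tree := G,
            isTree := ⟨hconn, hacyc⟩,
            K := fun a => S.C (a : ℕ),
            covers := ?_, junction := hjunction }, ⟨?_, ?_⟩, ?_⟩
  · -- covers
    intro v
    obtain ⟨a, ha, hva⟩ := hcov v
    exact ⟨⟨a, by omega⟩, hva⟩
  · -- cluster cards
    intro t'
    exact S.card_eq (t' : ℕ) (Nat.le_of_lt_succ t'.isLt)
  · -- separators
    intro e
    refine Sym2.ind (fun a b he => ?_) e
    have hab : G.Adj a b := he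
    have claim : ∀ a b : Fin (n + 1), G.Adj a b → p a = b →
        (S.C (a : ℕ) ∩ S.C (b : ℕ)).card = k - 1 := by
      intro a b hab hpab
      have ha0 : a ≠ 0 := by
        rintro rfl
        rw [hp0] at hpab
        exact hab.ne hpab
      have hpos : 0 < (a : ℕ) := Nat.pos_of_ne_zero (hvne a ha0)
      have haN : (a : ℕ) ≤ S.N := Nat.le_of_lt_succ a.isLt
      obtain ⟨u, huC, hsub, hfresh⟩ := S.glue (a : ℕ) hpos haN
      have hbval : (b : ℕ) = S.par (a : ℕ) := by rw [← hpab, hpval a ha0]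
      have hub : u ∉ S.C (b : ℕ) := by
        rw [hbval]
        exact hfresh _ (S.par_lt _ hpos haN)
      have heq : S.C (a : ℕ) ∩ S.C (b : ℕ) = (S.C (a : ℕ)).erase u := by
        ext x
        rw [Finset.mem_inter, Finset.mem_erase]
        constructor
        · rintro ⟨hx1, hx2⟩
          exact ⟨fun h => hub (h ▸ hx2), hx1⟩
        · rintro ⟨hx1, hx2⟩
          refine ⟨hx2, ?_⟩
          rw [hbval]
          exact hsub (Finset.mem_erase.mpr ⟨hx1, hx2⟩)
      rw [heq, Finset.card_erase_of_mem huC, S.card_eq _ haN]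
    rcases ((SimpleGraph.fromRel_adj _ a b).mp hab) with ⟨hne, h | h⟩
    · have := claim a b hab h
      show (JunctionTree.sep _ s(a, b)).card = k - 1
      rw [JunctionTree.sep]
      simpa using this
    · have := claim b a hab.symm h
      show (JunctionTree.sep _ s(a, b)).card = k - 1
      rw [JunctionTree.sep]
      rw [Finset.inter_comm] at this
      simpa using this
  · -- homes
    intro a ha
    exact ⟨⟨a, by omega⟩, fun x hx => hx⟩

open SimpleGraph in
lemma sep_key {V : Type} [DecidableEq V] (J : JunctionTree V) {base c t' : J.ι}
    (W : J.tree.Walk base c) (h : J.tree.Adj c t') (ht' : t' ∉ W.support)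
    {x : J.ι} (hx : x ∈ W.support) :
    J.K x ∩ J.K t' ⊆ J.K c := by
  classical
  have hxt : x ≠ t' := fun hxx => ht' (hxx ▸ hx)
  set r : J.tree.Walk x t' := (W.dropUntil x hx).concat h with hrdef
  have hrsub : ∀ y, y ∈ r.support → y ∈ W.support ∨ y = t' := by
    intro y hy
    rw [hrdef, Walk.concat_eq_append, Walk.mem_support_append_iff] at hy
    rcases hy with hy | hy
    · exact Or.inl (Walk.support_dropUntil_subset W hx hy)
    · rw [Walk.support_cons, List.mem_cons] at hy
      rcases hy with rfl | hy
      · exact Or.inl (W.end_mem_support)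
      · rw [Walk.support_nil, List.mem_singleton] at hy
        exact Or.inr hy
  set P := r.bypass with hPdef
  have hP : P.IsPath := r.bypass_isPath
  have hPsub : ∀ y, y ∈ P.support → y ∈ W.support ∨ y = t' :=
    fun y hy => hrsub y (Walk.support_bypass_subset r hy)
  obtain ⟨z, h₃, P₂, hPrev⟩ := Walk.exists_eq_cons_of_ne (Ne.symm hxt) P.reverse
  have hz_mem : z ∈ P.support := by
    have : z ∈ P.reverse.support := by
      rw [hPrev, Walk.support_cons]
      exact List.mem_cons_of_mem _ P₂.start_mem_support
    rwa [Walk.support_reverse, List.mem_reverse] at this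
  have hzt : z ≠ t' := by
    have hrp : P.reverse.IsPath := hP.reverse
    rw [hPrev] at hrp
    have := (Walk.cons_isPath_iff h₃ P₂).mp hrp
    intro hz
    exact this.2 (hz ▸ P₂.start_mem_support)
  have hzW : z ∈ W.support := by
    rcases hPsub z hz_mem with h1 | h1
    · exact h1
    · exact absurd h1 hzt
  have hzc : z = c := by
    by_contra hzc
    have htc : t' ≠ c := fun htc => ht' (htc ▸ W.end_mem_support)
    have p₁path : (Walk.cons h₃.symm (Walk.cons h.symm Walk.nil)).IsPath := by
      rw [Walk.cons_isPath_iff, Walk.cons_isPath_iff]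
      refine ⟨⟨Walk.IsPath.nil, ?_⟩, ?_⟩
      · rw [Walk.support_nil, List.mem_singleton]
        exact htc
      · rw [Walk.support_cons, Walk.support_nil]
        intro hmem
        rw [List.mem_cons, List.mem_singleton] at hmem
        rcases hmem with h1 | h1
        · exact hzt h1
        · exact hzc h1
    have p₂path : (W.dropUntil z hzW).bypass.IsPath := Walk.bypass_isPath _
    have ht'p₂ : t' ∉ (W.dropUntil z hzW).bypass.support := by
      intro hmem
      exact ht' (Walk.support_dropUntil_subset W hzW
        (Walk.support_bypass_subset _ hmem))
    have hacyc : J.tree.IsAcyclic := J.isTree.2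
    have := hacyc.path_unique ⟨Walk.cons h₃.symm (Walk.cons h.symm Walk.nil), p₁path⟩
      ⟨(W.dropUntil z hzW).bypass, p₂path⟩
    have heq : (Walk.cons h₃.symm (Walk.cons h.symm Walk.nil)) =
        (W.dropUntil z hzW).bypass := congrArg Subtype.val this
    apply ht'p₂
    rw [← heq]
    rw [Walk.support_cons]
    exact List.mem_cons_of_mem _ (Walk.start_mem_support _)
  exact J.junction x t' c P hP (hzc ▸ hz_mem)

open SimpleGraph in
lemma cover_rec {V : Type} [DecidableEq V] (J : JunctionTree V) (base : J.ι) :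
    ∀ {c : J.ι} (w : J.tree.Walk c base) (W : J.tree.Walk base c)
      (m : ℕ) (D : ℕ → J.ι) (pr : ℕ → ℕ),
      (∀ x, x ∈ W.support ↔ ∃ i, i < m ∧ D i = x) →
      (∀ i, 0 < i → i < m → pr i < i) →
      (∀ i, i < m → ∀ j, j < i → J.K (D j) ∩ J.K (D i) ⊆ J.K (D (pr i))) →
      ∃ (m' : ℕ) (D' : ℕ → J.ι) (pr' : ℕ → ℕ),
        m ≤ m' ∧ (∀ i, i < m → D' i = D i) ∧
        (∀ x, x ∈ w.support → ∃ i, i < m' ∧ D' i = x) ∧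
        (∀ i, 0 < i → i < m' → pr' i < i) ∧
        (∀ i, i < m' → ∀ j, j < i → J.K (D' j) ∩ J.K (D' i) ⊆ J.K (D' (pr' i))) := by
  intro c w
  induction w with
  | nil =>
    intro W m D pr hWD hpr hrip
    refine ⟨m, D, pr, le_refl m, fun _ _ => rfl, ?_, hpr, hrip⟩
    intro x hx
    rw [Walk.support_nil, List.mem_singleton] at hx
    subst hx
    exact (hWD x).mp W.end_mem_support
  | @cons c t' _ h w ih =>
    intro W m D pr hWD hpr hrip
    have hm : 0 < m := by
      obtain ⟨i, hi, _⟩ := (hWD _).mp W.start_mem_support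
      omega
    by_cases hmem : ∃ i, i < m ∧ D i = t'
    · -- t' already covered
      have hWD' : ∀ x, x ∈ (W.concat h).support ↔ ∃ i, i < m ∧ D i = x := by
        intro x
        rw [Walk.support_concat, List.mem_append,
          List.mem_singleton]
        constructor
        · rintro (hx | rfl)
          · exact (hWD x).mp hx
          · exact hmem
        · intro hx
          exact Or.inl ((hWD x).mpr hx)
      obtain ⟨m', D', pr', hle, hpres, hcov, hpr', hrip'⟩ :=
        ih (W.concat h) m D pr hWD' hpr hrip
      refine ⟨m', D', pr', hle, hpres, ?_, hpr', hrip'⟩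
      intro x hx
      rw [Walk.support_cons, List.mem_cons] at hx
      rcases hx with rfl | hx
      · obtain ⟨i, hi, hDi⟩ := (hWD x).mp W.end_mem_support
        exact ⟨i, lt_of_lt_of_le hi hle, by rw [hpres i hi]; exact hDi⟩
      · exact hcov x hx
    · -- t' is fresh
      have ht'W : t' ∉ W.support := fun hW => hmem ((hWD t').mp hW)
      obtain ⟨j₀, hj₀, hDj₀⟩ := (hWD c).mp W.end_mem_support
      set D₁ : ℕ → J.ι := fun i => if i = m then t' else D i with hD₁def
      set pr₁ : ℕ → ℕ := fun i => if i = m then j₀ else pr i with hpr₁def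
      have hD₁old : ∀ i, i ≠ m → D₁ i = D i := fun i hi => if_neg hi
      have hD₁top : D₁ m = t' := if_pos rfl
      have hWD₁ : ∀ x, x ∈ (W.concat h).support ↔ ∃ i, i < m + 1 ∧ D₁ i = x := by
        intro x
        rw [Walk.support_concat, List.mem_append,
          List.mem_singleton]
        constructor
        · rintro (hx | rfl)
          · obtain ⟨i, hi, hDi⟩ := (hWD x).mp hx
            exact ⟨i, by omega, by rw [hD₁old i (by omega)]; exact hDi⟩
          · exact ⟨m, by omega, hD₁top⟩
        · rintro ⟨i, hi, rfl⟩
          rcases eq_or_ne i m with rfl | hne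
          · rw [hD₁top]; exact Or.inr rfl
          · rw [hD₁old i hne]
            exact Or.inl ((hWD _).mpr ⟨i, by omega, rfl⟩)
      have hpr₁ : ∀ i, 0 < i → i < m + 1 → pr₁ i < i := by
        intro i h0 hi
        rcases eq_or_ne i m with rfl | hne
        · have he : pr₁ i = j₀ := if_pos rfl
          omega
        · have he : pr₁ i = pr i := if_neg hne
          have := hpr i h0 (by omega)
          omega
      have hrip₁ : ∀ i, i < m + 1 → ∀ j, j < i →
          J.K (D₁ j) ∩ J.K (D₁ i) ⊆ J.K (D₁ (pr₁ i)) := by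
        intro i hi j hj
        rcases eq_or_ne i m with rfl | hne
        · rw [hD₁top, hD₁old j (by omega)]
          have hpr₁m : pr₁ i = j₀ := if_pos rfl
          rw [hpr₁m, hD₁old j₀ (by omega), hDj₀]
          exact sep_key J W h ht'W ((hWD (D j)).mpr ⟨j, by omega, rfl⟩)
        · have him : i < m := by omega
          have hpr₁i : pr₁ i = pr i := if_neg hne
          rw [hpr₁i, hD₁old i hne, hD₁old j (by omega)]
          rcases Nat.eq_zero_or_pos i with rfl | h0
          · omega
          · rw [hD₁old (pr i) (by have := hpr i h0 him; omega)]
            exact hrip i him j hj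
      obtain ⟨m', D', pr', hle, hpres, hcov, hpr', hrip'⟩ :=
        ih (W.concat h) (m + 1) D₁ pr₁ hWD₁ hpr₁ hrip₁
      refine ⟨m', D', pr', by omega, ?_, ?_, hpr', hrip'⟩
      · intro i hi
        rw [hpres i (by omega), hD₁old i (by omega)]
      · intro x hx
        rw [Walk.support_cons, List.mem_cons] at hx
        rcases hx with rfl | hx
        · exact ⟨j₀, by omega, by
            rw [hpres j₀ (by omega), hD₁old j₀ (by omega)]; exact hDj₀⟩
        · exact hcov x hx

/-- structural core of the transformation of a `k`-width junction
tree into a `k`-th order cherry tree. Let `J` be a junction tree on a finite vertex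
set `V` in which every cluster has at most `k` elements, and suppose `|V| ≥ k`. Then
there exists a `k`-th order cherry tree `J'` on `V` such that every cluster of `J`
is contained in some cluster of `J'`. -/
theorem junctionTree_to_cherryTree {V : Type} [Fintype V] [DecidableEq V]
    (k : ℕ) (J : JunctionTree V)
    (hwidth : ∀ t : J.ι, (J.K t).card ≤ k)
    (hV : k ≤ Fintype.card V) :
    ∃ J' : JunctionTree V, J'.IsCherry k ∧
      ∀ t : J.ι, ∃ t' : J'.ι, J.K t ⊆ J'.K t' := by
  classical
  obtain ⟨hconn, hacyc⟩ := J.isTree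
  have hne : Nonempty J.ι := hconn.nonempty
  have hfin : Fintype J.ι := J.fin
  obtain ⟨base⟩ := hne
  -- a closed walk visiting all vertices
  have hwalk : ∀ l : List J.ι, ∃ w : J.tree.Walk base base, ∀ t ∈ l, t ∈ w.support := by
    intro l
    induction l with
    | nil => exact ⟨SimpleGraph.Walk.nil, by simp⟩
    | cons a l ih =>
      obtain ⟨w, hw⟩ := ih
      have hr : J.tree.Reachable base a := hconn.preconnected base a
      obtain ⟨q⟩ := hr
      refine ⟨(q.append q.reverse).append w, ?_⟩
      intro t ht
      rw [List.mem_cons] at ht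
      rw [SimpleGraph.Walk.mem_support_append_iff]
      rcases ht with rfl | ht
      · exact Or.inl (by
          rw [SimpleGraph.Walk.mem_support_append_iff]
          exact Or.inl q.end_mem_support)
      · exact Or.inr (hw t ht)
  obtain ⟨w, hw⟩ := hwalk Finset.univ.toList
  have hwall : ∀ t : J.ι, t ∈ w.support := fun t =>
    hw t (Finset.mem_toList.mpr (Finset.mem_univ t))
  -- extract an RIP-ordered sequence of nodes
  obtain ⟨m, D, pr, hm1, _, hcovD, hprD, hripD⟩ :=
    cover_rec J base w SimpleGraph.Walk.nil 1 (fun _ => base) (fun _ => 0)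
      (by
        intro x
        rw [SimpleGraph.Walk.support_nil, List.mem_singleton]
        constructor
        · rintro rfl; exact ⟨0, by omega, rfl⟩
        · rintro ⟨i, _, rfl⟩; rfl)
      (by intro i h1 h2; omega)
      (by intro i hi j hj; omega)
  -- build the pre-cherry structure
  obtain ⟨S, hhomes, hcovS⟩ := exists_preCherry k m (fun i => J.K (D i)) pr hV hprD
    (fun i _ => hwidth (D i)) hripD
    (by
      intro v
      obtain ⟨t, hvt⟩ := J.covers v
      obtain ⟨i, him, hDi⟩ := hcovD t (hwall t)
      exact ⟨i, him, show v ∈ J.K (D i) by rw [hDi]; exact hvt⟩)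
  obtain ⟨J', hcherry, hK⟩ := preCherry_to_junction S hcovS
  refine ⟨J', hcherry, ?_⟩
  intro t
  obtain ⟨i, him, hDi⟩ := hcovD t (hwall t)
  obtain ⟨a, ha, hsub⟩ := hhomes i him
  obtain ⟨t', ht'⟩ := hK a ha
  refine ⟨t', ?_⟩
  rw [← hDi]
  exact fun x hx => ht' (hsub hx)
end

section
/- (Structural core of the theorem that every k-th order cherry tree copula can be expressed as a (k+1)-th order cherry tree copula.) Let T be a k-th order cherry tree on a finite vertex set V with |V| ≥ k + 1. Then there exists a (k+1)-th order cherry tree T' on V such that every cluster of T is contained in some cluster of T'. -/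
section CherryAux

open SimpleGraph Walk

private lemma dist_getVert_le {ι : Type} {G : SimpleGraph ι} (hconn : G.Connected)
    {a b : ι} (p : G.Walk a b) : ∀ i, G.dist a (p.getVert i) ≤ i := by
  induction p with
  | nil =>
    intro i
    rw [Walk.getVert_of_length_le _ (by simp : (Walk.nil : G.Walk _ _).length ≤ i)]
    simp [SimpleGraph.dist_self]
  | @cons a c b h q ih =>
    intro i
    rcases i with _ | n
    · simp [Walk.getVert_zero]
    · rw [Walk.getVert_cons_succ]
      calc G.dist a (q.getVert n) ≤ G.dist a c + G.dist c (q.getVert n) :=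
            hconn.dist_triangle
        _ ≤ n + 1 := by
            have h1 : G.dist a c = 1 := SimpleGraph.dist_eq_one_iff_adj.2 h
            have := ih n
            omega

private lemma dist_le_of_mem_support {ι : Type} [DecidableEq ι] {G : SimpleGraph ι}
    {a b x : ι} (p : G.Walk a b) (hx : x ∈ p.support) : G.dist a x ≤ p.length :=
  le_trans (SimpleGraph.dist_le (p.takeUntil x hx)) (Walk.length_takeUntil_le p hx)

private lemma concat_isPath {ι : Type} {G : SimpleGraph ι} {r a b : ι}
    {p : G.Walk r b} (hp : p.IsPath) (h : G.Adj b a) (ha : a ∉ p.support) :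
    (p.concat h).IsPath := by
  rw [← Walk.isPath_reverse_iff, Walk.reverse_concat, Walk.cons_isPath_iff]
  refine ⟨hp.reverse, ?_⟩
  rwa [Walk.support_reverse, List.mem_reverse]

private lemma reverse_concat_getVert_one {ι : Type} {G : SimpleGraph ι} {r a b : ι}
    (p : G.Walk r b) (h : G.Adj b a) : (p.concat h).reverse.getVert 1 = b := by
  rw [Walk.reverse_concat, Walk.getVert_cons_succ, Walk.getVert_zero]

private lemma closer_neighbor_unique {ι : Type} [DecidableEq ι] {G : SimpleGraph ι} (hG : G.IsTree)
    (r a b b' : ι) (hab : G.Adj a b) (hab' : G.Adj a b')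
    (hb : G.dist r b + 1 = G.dist r a) (hb' : G.dist r b' + 1 = G.dist r a) :
    b = b' := by
  obtain ⟨p, hp, hl⟩ := hG.isConnected.exists_path_of_dist r b
  obtain ⟨p', hp', hl'⟩ := hG.isConnected.exists_path_of_dist r b'
  have hna : a ∉ p.support := by
    intro hmem
    have := dist_le_of_mem_support p hmem
    omega
  have hna' : a ∉ p'.support := by
    intro hmem
    have := dist_le_of_mem_support p' hmem
    omega
  have hq : (p.concat hab.symm).IsPath := concat_isPath hp hab.symm hna
  have hq' : (p'.concat hab'.symm).IsPath := concat_isPath hp' hab'.symm hna'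
  have := hG.IsAcyclic.path_unique ⟨p.concat hab.symm, hq⟩ ⟨p'.concat hab'.symm, hq'⟩
  have heq : p.concat hab.symm = p'.concat hab'.symm := congrArg Subtype.val this
  have h1 := reverse_concat_getVert_one p hab.symm
  have h2 := reverse_concat_getVert_one p' hab'.symm
  rw [heq] at h1
  rw [h1] at h2
  exact h2

private lemma adj_dist_cases {ι : Type} [DecidableEq ι] {G : SimpleGraph ι} (hG : G.IsTree)
    (r a b : ι) (hab : G.Adj a b) :
    G.dist r b + 1 = G.dist r a ∨ G.dist r a + 1 = G.dist r b := by
  obtain ⟨p, hp, hl⟩ := hG.isConnected.exists_path_of_dist r a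
  by_cases hb : b ∈ p.support
  · left
    have hq2 : (p.dropUntil b hb).IsPath := hp.dropUntil hb
    have hsingle := hG.IsAcyclic.path_unique ⟨p.dropUntil b hb, hq2⟩
      (SimpleGraph.Path.singleton hab.symm)
    have hq2' : p.dropUntil b hb = Walk.cons hab.symm Walk.nil := congrArg Subtype.val hsingle
    have hlen2 : (p.dropUntil b hb).length = 1 := by rw [hq2']; rfl
    have hsum : (p.takeUntil b hb).length + (p.dropUntil b hb).length = p.length := by
      rw [← Walk.length_append, Walk.take_spec]
    have h1 : G.dist r b ≤ (p.takeUntil b hb).length := SimpleGraph.dist_le _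
    have h4 : G.dist r a ≤ G.dist r b + 1 := by
      have := hG.isConnected.dist_triangle (u := r) (v := b) (w := a)
      have hba : G.dist b a = 1 := SimpleGraph.dist_eq_one_iff_adj.2 hab.symm
      omega
    omega
  · right
    have hq : (p.concat hab).IsPath := concat_isPath hp hab hb
    obtain ⟨p', hp', hl'⟩ := hG.isConnected.exists_path_of_dist r b
    have := hG.IsAcyclic.path_unique ⟨p.concat hab, hq⟩ ⟨p', hp'⟩
    have heq : p.concat hab = p' := congrArg Subtype.val this
    have : (p.concat hab).length = G.dist r b := by rw [heq]; exact hl'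
    rw [Walk.length_concat] at this
    omega

private def funcGraph {α : Type} (f : α → α) : SimpleGraph α where
  Adj s t := s ≠ t ∧ (f s = t ∨ f t = s)
  symm := ⟨fun s t h => ⟨Ne.symm h.1, h.2.symm⟩⟩
  loopless := ⟨fun s h => h.1 rfl⟩

private lemma funcGraph_dir {α : Type} (f : α → α) (m : α → ℕ)
    (hdec : ∀ t, f t ≠ t → m (f t) < m t) {s t : α}
    (h : (funcGraph f).Adj s t) (hm : m t ≤ m s) : f s = t := by
  rcases h.2 with h1 | h1
  · exact h1
  · exfalso
    by_cases hfix : f t = t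
    · exact h.1 (by rw [← h1, hfix])
    · have := hdec t hfix
      rw [h1] at this
      omega

private lemma funcGraph_isAcyclic {α : Type} (f : α → α) (m : α → ℕ)
    (hdec : ∀ t, f t ≠ t → m (f t) < m t) : (funcGraph f).IsAcyclic := by
  classical
  intro v c hc
  have hvmem : v ∈ c.support := c.start_mem_support
  obtain ⟨x, hxmem, hxmax⟩ :=
    Finset.exists_max_image c.support.toFinset m ⟨v, List.mem_toFinset.2 hvmem⟩
  rw [List.mem_toFinset] at hxmem
  have hc₂ := hc.rotate hxmem
  set c₂ := c.rotate x hxmem with hc₂def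
  have hmax₂ : ∀ y ∈ c₂.support, m y ≤ m x := by
    intro y hy
    rw [Walk.support_eq_cons] at hy
    rcases List.mem_cons.mp hy with hy | hy
    · exact hy ▸ le_refl _
    · have hrot := Walk.support_rotate c x hxmem
      have : y ∈ c.support.tail := hrot.mem_iff.mp hy
      exact hxmax y (List.mem_toFinset.2 (List.tail_subset _ this))
  have hnn : ¬ c₂.Nil := hc₂.not_nil
  obtain ⟨y, h1, q, hq⟩ := Walk.not_nil_iff.mp hnn
  obtain ⟨z, p₂, h2, hconc⟩ := Walk.exists_cons_eq_concat h1 q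
  have hy : y ∈ c₂.support := by
    rw [hq, Walk.support_cons]
    exact List.mem_cons_of_mem _ q.start_mem_support
  have hz : z ∈ c₂.support := by
    rw [hq, hconc, Walk.support_concat]
    exact List.mem_append_left _ p₂.end_mem_support
  have hfy : f x = y := funcGraph_dir f m hdec h1 (hmax₂ y hy)
  have hfz : f x = z := funcGraph_dir f m hdec h2.symm (hmax₂ z hz)
  have he1 : c₂.edges = s(x, y) :: q.edges := by rw [hq, Walk.edges_cons]
  have he2 : c₂.edges = p₂.edges ++ [s(z, x)] := by
    rw [hq, hconc, Walk.edges_concat, List.concat_eq_append]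
  have hnd : c₂.edges.Nodup := hc₂.isCircuit.isTrail.edges_nodup
  have hlen3 : 3 ≤ c₂.length := hc₂.three_le_length
  have hql : q.edges ≠ [] := by
    have h5 : c₂.edges.length = c₂.length := Walk.length_edges _
    rw [he1] at h5
    simp only [List.length_cons] at h5
    intro h
    rw [h] at h5
    simp at h5
    omega
  have hmem : s(z, x) ∈ q.edges := by
    have hlast : (s(x,y) :: q.edges).getLast? = some s(z, x) := by
      rw [← he1, he2]; simp
    obtain ⟨w, t', hwt⟩ := List.exists_cons_of_ne_nil hql
    rw [hwt, List.getLast?_cons_cons] at hlast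
    rw [hwt]
    exact List.mem_of_mem_getLast? hlast
  have hzx : s(z, x) = s(x, y) := by
    rw [← hfy, ← hfz, Sym2.eq_swap]
  rw [hzx] at hmem
  rw [he1] at hnd
  exact (List.nodup_cons.mp hnd).1 hmem

private lemma funcGraph_connected {α : Type} (f : α → α) (m : α → ℕ)
    (hdec : ∀ t, f t ≠ t → m (f t) < m t) (z : α)
    (hfix : ∀ t, f t = t → t = z) : (funcGraph f).Connected := by
  have hreach : ∀ (n : ℕ) (t : α), m t ≤ n → (funcGraph f).Reachable t z := by
    intro n
    induction n with
    | zero =>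
      intro t ht
      by_cases hf : f t = t
      · rw [hfix t hf]
      · have := hdec t hf; omega
    | succ n ih =>
      intro t ht
      by_cases hf : f t = t
      · rw [hfix t hf]
      · have hadj : (funcGraph f).Adj t (f t) := ⟨fun h => hf h.symm, Or.inl rfl⟩
        exact hadj.reachable.trans (ih (f t) (by have := hdec t hf; omega))
  haveI : Nonempty α := ⟨z⟩
  exact Connected.mk fun a b =>
    ((hreach (m a) a le_rfl).trans (hreach (m b) b le_rfl).symm)

private noncomputable def CTpi {ι : Type} [DecidableEq ι] (r c0 : ι) (hc0 : c0 ≠ r)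
    (t : ι) : {x : ι // x ≠ r} :=
  if h : t = r then ⟨c0, hc0⟩ else ⟨t, h⟩

end CherryAux

open SimpleGraph Walk in
/-- structural core of the theorem that every `k`-th order cherry
tree copula can be expressed as a `(k+1)`-th order cherry tree copula. Let `J` be a
`k`-th order cherry tree on a finite vertex set `V` with `|V| ≥ k + 1`. Then there
exists a `(k+1)`-th order cherry tree `J'` on `V` such that every cluster of `J` is
contained in some cluster of `J'`. -/
theorem cherryTree_to_higher_order_cherryTree {V : Type} [Fintype V] [DecidableEq V]
    (k : ℕ) (J : JunctionTree V)
    (hJ : J.IsCherry k)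
    (hV : k + 1 ≤ Fintype.card V) :
    ∃ J' : JunctionTree V, J'.IsCherry (k + 1) ∧
      ∀ t : J.ι, ∃ t' : J'.ι, J.K t ⊆ J'.K t' := by
  classical
  obtain ⟨hK, hsepJ⟩ := hJ
  have hG := J.isTree
  letI := J.fin
  haveI : DecidableEq J.ι := Classical.decEq _
  have hconn := hG.isConnected
  have hacyc := hG.IsAcyclic
  -- k ≥ 1
  have hVpos : 0 < Fintype.card V := by omega
  obtain ⟨v0⟩ := Fintype.card_pos_iff.mp hVpos
  obtain ⟨t0, ht0⟩ := J.covers v0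
  have hk1 : 1 ≤ k := by
    by_contra h
    have h0 : k = 0 := by omega
    have := hK t0
    rw [h0, Finset.card_eq_zero] at this
    rw [this] at ht0
    exact absurd ht0 (Finset.notMem_empty _)
  obtain ⟨r⟩ : Nonempty J.ι := hconn.nonempty
  -- exists a node different from r
  have hex : ∃ t : J.ι, t ≠ r := by
    by_contra hno
    push_neg at hno
    have hsub : (Finset.univ : Finset V) ⊆ J.K r := by
      intro v _
      obtain ⟨t, ht⟩ := J.covers v
      rwa [hno t] at ht
    have hcard := Finset.card_le_card hsub
    rw [Finset.card_univ, hK r] at hcard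
    omega
  obtain ⟨t1, ht1⟩ := hex
  obtain ⟨w0⟩ := hconn.preconnected r t1
  have hw0 : ¬ w0.Nil := Walk.not_nil_of_ne (Ne.symm ht1)
  set c0 := w0.getVert 1 with hc0def
  have hrc0 : J.tree.Adj r c0 := w0.adj_snd hw0
  have hc0 : c0 ≠ r := fun h => J.tree.loopless.irrefl r (by rwa [h] at hrc0)
  -- parent function
  have H1 : ∀ t : J.ι, t ≠ r →
      ∃ s, J.tree.Adj t s ∧ J.tree.dist r s + 1 = J.tree.dist r t := by
    intro t ht
    have hd : 0 < J.tree.dist r t := hconn.pos_dist_of_ne (Ne.symm ht)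
    obtain ⟨p, hp, hl⟩ := hconn.exists_path_of_dist r t
    have hnil : ¬ p.reverse.Nil := by
      rw [Walk.nil_iff_length_eq, Walk.length_reverse]
      omega
    obtain ⟨s, hadj, q, hq⟩ := Walk.not_nil_iff.mp hnil
    refine ⟨s, hadj, ?_⟩
    have hlen : q.length + 1 = J.tree.dist r t := by
      have h6 := congrArg Walk.length hq
      rw [Walk.length_reverse, Walk.length_cons] at h6
      omega
    have h1 : J.tree.dist r s ≤ q.length := by
      have := SimpleGraph.dist_le q.reverse
      rwa [Walk.length_reverse] at this
    have h2 : J.tree.dist r t ≤ J.tree.dist r s + 1 := by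
      have h3 := hconn.dist_triangle (u := r) (v := s) (w := t)
      have h4 : J.tree.dist s t = 1 := SimpleGraph.dist_eq_one_iff_adj.2 hadj.symm
      omega
    omega
  set par : J.ι → J.ι := fun t => if h : t = r then r else (H1 t h).choose with hpar_def
  have hP1 : ∀ t, t ≠ r → J.tree.Adj t (par t) := by
    intro t h
    simp only [hpar_def, dif_neg h]
    exact (H1 t h).choose_spec.1
  have hP2 : ∀ t, t ≠ r → J.tree.dist r (par t) + 1 = J.tree.dist r t := by
    intro t h
    simp only [hpar_def, dif_neg h]
    exact (H1 t h).choose_spec.2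
  have hparr : par r = r := by simp [hpar_def]
  have hpc0 : par c0 = r := by
    have hd1 : J.tree.dist r c0 = 1 := SimpleGraph.dist_eq_one_iff_adj.2 hrc0
    have := hP2 c0 hc0
    rw [hd1] at this
    have h0 : J.tree.dist r (par c0) = 0 := by omega
    exact (hconn.dist_eq_zero_iff.mp h0).symm
  have hUniq : ∀ a b, J.tree.Adj a b →
      J.tree.dist r b + 1 = J.tree.dist r a → par a = b := by
    intro a b hab hb
    have ha : a ≠ r := by
      intro h
      rw [h, SimpleGraph.dist_self] at hb
      omega
    exact closer_neighbor_unique hG r a (par a) b (hP1 a ha) hab (hP2 a ha) hb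
  have hstep : ∀ a b, J.tree.Adj a b → par a = b ∨ par b = a := by
    intro a b hab
    rcases adj_dist_cases hG r a b hab with h | h
    · exact Or.inl (hUniq a b hab h)
    · exact Or.inr (hUniq b a hab.symm h)
  -- the new junction tree
  set π : J.ι → {x : J.ι // x ≠ r} := CTpi r c0 hc0 with hπdef
  have hπr : π r = ⟨c0, hc0⟩ := dif_pos rfl
  have hπn : ∀ t (h : t ≠ r), π t = ⟨t, h⟩ := fun t h => dif_neg h
  set f : {x : J.ι // x ≠ r} → {x : J.ι // x ≠ r} := fun t' => π (par t'.1) with hfdef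
  set m : {x : J.ι // x ≠ r} → ℕ :=
    fun t' => if t'.1 = c0 then 0 else J.tree.dist r t'.1 with hmdef
  have hfc0 : f ⟨c0, hc0⟩ = ⟨c0, hc0⟩ := by
    simp only [hfdef]
    rw [hpc0, hπr]
  have hdec : ∀ t', f t' ≠ t' → m (f t') < m t' := by
    intro t' hne
    by_cases hc : t'.1 = c0
    · exfalso
      apply hne
      have : t' = ⟨c0, hc0⟩ := Subtype.ext hc
      rw [this, hfc0]
    · have hmt : m t' = J.tree.dist r t'.1 := if_neg hc
      have hpos : 0 < J.tree.dist r t'.1 := hconn.pos_dist_of_ne (Ne.symm t'.2)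
      by_cases hpr : par t'.1 = r
      · have : f t' = ⟨c0, hc0⟩ := by simp only [hfdef]; rw [hpr, hπr]
        rw [this]
        have : m ⟨c0, hc0⟩ = 0 := if_pos rfl
        rw [this, hmt]
        omega
      · have hft : f t' = ⟨par t'.1, hpr⟩ := by simp only [hfdef]; rw [hπn _ hpr]
        have hlt : J.tree.dist r (par t'.1) < J.tree.dist r t'.1 := by
          have := hP2 t'.1 t'.2
          omega
        rw [hft, hmt]
        by_cases h2 : par t'.1 = c0
        · have : m ⟨par t'.1, hpr⟩ = 0 := if_pos h2
          rw [this]; omega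
        · have : m ⟨par t'.1, hpr⟩ = J.tree.dist r (par t'.1) := if_neg h2
          rw [this]; omega
  have hfixz : ∀ t', f t' = t' → t' = ⟨c0, hc0⟩ := by
    intro t' hf
    by_cases hpr : par t'.1 = r
    · have : f t' = ⟨c0, hc0⟩ := by simp only [hfdef]; rw [hpr, hπr]
      rw [← hf, this]
    · exfalso
      have hft : f t' = ⟨par t'.1, hpr⟩ := by simp only [hfdef]; rw [hπn _ hpr]
      rw [hft] at hf
      have : par t'.1 = t'.1 := congrArg Subtype.val hf
      have hadj := hP1 t'.1 t'.2
      rw [this] at hadj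
      exact J.tree.loopless.irrefl t'.1 hadj

  -- the new graph
  set G' : SimpleGraph {x : J.ι // x ≠ r} := funcGraph f with hG'def
  have hacyc' : G'.IsAcyclic := funcGraph_isAcyclic f m hdec
  have hconn' : G'.Connected := funcGraph_connected f m hdec ⟨c0, hc0⟩ hfixz
  set K' : {x : J.ι // x ≠ r} → Finset V :=
    fun t' => J.K t'.1 ∪ J.K (par t'.1) with hK'def
  have hπK : ∀ (y : J.ι) (v : V), v ∈ J.K y → v ∈ K' (π y) := by
    intro y v hv
    by_cases h : y = r
    · subst h
      rw [hπr]
      simp only [hK'def]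
      rw [hpc0]
      exact Finset.mem_union_right _ hv
    · rw [hπn y h]
      exact Finset.mem_union_left _ hv
  -- cluster cardinalities
  have hcard' : ∀ t', (K' t').card = k + 1 := by
    intro t'
    have hadj := hP1 t'.1 t'.2
    have hsepc := hsepJ s(t'.1, par t'.1) (J.tree.mem_edgeSet.mpr hadj)
    have hsep_eq : J.sep s(t'.1, par t'.1) = J.K t'.1 ∩ J.K (par t'.1) := rfl
    rw [hsep_eq] at hsepc
    have hu := Finset.card_union_add_card_inter (J.K t'.1) (J.K (par t'.1))
    rw [hK, hK, hsepc] at hu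
    simp only [hK'def]
    omega
  -- mapping walks into the new graph
  have hπadj : ∀ a b : J.ι, J.tree.Adj a b → π a = π b ∨ G'.Adj (π a) (π b) := by
    have aux : ∀ a b, J.tree.Adj a b → par a = b → π a = π b ∨ G'.Adj (π a) (π b) := by
      intro a b hab hp
      have ha : a ≠ r := by
        intro h
        rw [h, hparr] at hp
        rw [h, ← hp] at hab
        exact J.tree.loopless.irrefl _ hab
      have hfa : f (π a) = π b := by
        rw [hπn a ha]
        show π (par a) = π b
        rw [hp]
      by_cases h : π a = π b
      · exact Or.inl h
      · exact Or.inr ⟨h, Or.inl hfa⟩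
    intro a b hab
    rcases hstep a b hab with h | h
    · exact aux a b hab h
    · rcases aux b a hab.symm h with h1 | h1
      · exact Or.inl h1.symm
      · exact Or.inr h1.symm
  have hmapwalk : ∀ {a b : J.ι} (w : J.tree.Walk a b),
      ∃ w' : G'.Walk (π a) (π b), ∀ x ∈ w'.support, ∃ y ∈ w.support, π y = x := by
    intro a b w
    induction w with
    | nil =>
      refine ⟨Walk.nil, ?_⟩
      intro x hx
      rw [Walk.support_nil, List.mem_singleton] at hx
      exact ⟨_, by simp, hx.symm⟩
    | @cons a c b h q ih =>
      obtain ⟨w', hw'⟩ := ih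
      rcases hπadj a c h with heq | hadj
      · refine ⟨w'.copy heq.symm rfl, ?_⟩
        intro x hx
        rw [Walk.support_copy] at hx
        obtain ⟨y, hy, hxy⟩ := hw' x hx
        exact ⟨y, by rw [Walk.support_cons]; exact List.mem_cons_of_mem _ hy, hxy⟩
      · refine ⟨Walk.cons hadj w', ?_⟩
        intro x hx
        rw [Walk.support_cons] at hx
        rcases List.mem_cons.mp hx with hx | hx
        · exact ⟨a, by rw [Walk.support_cons]; exact List.mem_cons_self, hx.symm⟩
        · obtain ⟨y, hy, hxy⟩ := hw' x hx
          exact ⟨y, by rw [Walk.support_cons]; exact List.mem_cons_of_mem _ hy, hxy⟩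
  have hSwalk : ∀ a b : J.ι, ∃ w : J.tree.Walk a b,
      ∀ x ∈ w.support, J.K a ∩ J.K b ⊆ J.K x := by
    intro a b
    obtain ⟨p, hp, _⟩ := hconn.exists_path_of_dist a b
    exact ⟨p, fun x hx => J.junction a b x p hp hx⟩
  have hlink : ∀ (s' : {x : J.ι // x ≠ r}) (v : V), v ∈ K' s' →
      ∃ (a : J.ι) (w : G'.Walk s' (π a)), v ∈ J.K a ∧ ∀ x ∈ w.support, v ∈ K' x := by
    intro s' v hv
    have hπs : π s'.1 = s' := by rw [hπn s'.1 s'.2]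
    rcases Finset.mem_union.mp hv with h | h
    · refine ⟨s'.1, Walk.nil.copy rfl hπs.symm, h, ?_⟩
      intro x hx
      rw [Walk.support_copy, Walk.support_nil, List.mem_singleton] at hx
      rw [hx]
      exact hv
    · by_cases heq : π (par s'.1) = s'
      · refine ⟨par s'.1, Walk.nil.copy rfl heq.symm, h, ?_⟩
        intro x hx
        rw [Walk.support_copy, Walk.support_nil, List.mem_singleton] at hx
        rw [hx]
        exact hv
      · have hadj : G'.Adj s' (π (par s'.1)) := ⟨fun hh => heq hh.symm, Or.inl rfl⟩
        refine ⟨par s'.1, Walk.cons hadj Walk.nil, h, ?_⟩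
        intro x hx
        rw [Walk.support_cons] at hx
        rcases List.mem_cons.mp hx with hx | hx
        · rw [hx]; exact hv
        · rw [Walk.support_nil, List.mem_singleton] at hx
          rw [hx]
          by_cases hr : par s'.1 = r
          · rw [hr, hπr]
            simp only [hK'def]
            rw [hpc0]
            refine Finset.mem_union_right _ ?_
            rw [← hr]
            exact h
          · rw [hπn _ hr]
            exact Finset.mem_union_left _ h
  have junction' : ∀ (s' t' u' : {x : J.ι // x ≠ r}) (p : G'.Walk s' t'),
      p.IsPath → u' ∈ p.support → K' s' ∩ K' t' ⊆ K' u' := by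
    intro s' t' u' p hp hu v hv
    rw [Finset.mem_inter] at hv
    obtain ⟨a, w₁, hva, hw₁⟩ := hlink s' v hv.1
    obtain ⟨b, w₂, hvb, hw₂⟩ := hlink t' v hv.2
    obtain ⟨wG, hwG⟩ := hSwalk a b
    obtain ⟨w', hw'⟩ := hmapwalk wG
    set W : G'.Walk s' t' := w₁.append (w'.append w₂.reverse) with hWdef
    have hWs : ∀ x ∈ W.support, v ∈ K' x := by
      intro x hx
      rw [hWdef, Walk.mem_support_append_iff] at hx
      rcases hx with hx | hx
      · exact hw₁ x hx
      · rw [Walk.mem_support_append_iff] at hx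
        rcases hx with hx | hx
        · obtain ⟨y, hy, hxy⟩ := hw' x hx
          have hvy : v ∈ J.K y := hwG y hy (Finset.mem_inter.mpr ⟨hva, hvb⟩)
          rw [← hxy]
          exact hπK y v hvy
        · rw [Walk.support_reverse, List.mem_reverse] at hx
          exact hw₂ x hx
    have hpW : p = W.bypass := by
      have := hacyc'.path_unique ⟨p, hp⟩ ⟨W.bypass, W.bypass_isPath⟩
      exact congrArg Subtype.val this
    exact hWs u' (W.support_bypass_subset (by rw [← hpW]; exact hu))
  have covers' : ∀ v : V, ∃ t', v ∈ K' t' := by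
    intro v
    obtain ⟨t, ht⟩ := J.covers v
    exact ⟨π t, hπK t v ht⟩
  -- separators
  have hsepAux : ∀ s' t' : {x : J.ι // x ≠ r}, G'.Adj s' t' → f t' = s' →
      (K' s' ∩ K' t').card = k := by
    intro s' t' hadj hft
    by_cases hpr : par t'.1 = r
    · have hs' : s' = ⟨c0, hc0⟩ := by
        rw [← hft]
        show π (par t'.1) = _
        rw [hpr, hπr]
      have htc0 : t'.1 ≠ c0 := by
        intro hh
        apply hadj.1
        rw [hs']
        exact Subtype.ext hh.symm
      have htr : J.tree.Adj t'.1 r := by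
        have := hP1 t'.1 t'.2
        rwa [hpr] at this
      have hpath : (Walk.cons htr (Walk.cons hrc0 Walk.nil)).IsPath := by
        rw [Walk.cons_isPath_iff, Walk.cons_isPath_iff]
        refine ⟨⟨Walk.IsPath.nil, ?_⟩, ?_⟩
        · rw [Walk.support_nil, List.mem_singleton]
          exact Ne.symm hc0
        · rw [Walk.support_cons, Walk.support_nil]
          intro hmem
          rcases List.mem_cons.mp hmem with hh | hh
          · exact t'.2 hh
          · rw [List.mem_singleton] at hh
            exact htc0 hh
      have hjunc : J.K t'.1 ∩ J.K c0 ⊆ J.K r :=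
        J.junction t'.1 c0 r _ hpath (by rw [Walk.support_cons]; simp)
      have hint : K' s' ∩ K' t' = J.K r := by
        rw [hs']
        simp only [hK'def]
        rw [hpc0, hpr]
        apply Finset.Subset.antisymm
        · intro v hv
          rw [Finset.mem_inter, Finset.mem_union, Finset.mem_union] at hv
          rcases hv.2 with h2 | h2
          · rcases hv.1 with h1 | h1
            · exact hjunc (Finset.mem_inter.mpr ⟨h2, h1⟩)
            · exact h1
          · exact h2
        · intro v hv
          exact Finset.mem_inter.mpr
            ⟨Finset.mem_union_right _ hv, Finset.mem_union_right _ hv⟩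
      rw [hint, hK]
    · have hs' : s' = ⟨par t'.1, hpr⟩ := by
        rw [← hft]
        show π (par t'.1) = _
        rw [hπn _ hpr]
      have h1 := hP1 t'.1 t'.2
      have h2 := hP1 (par t'.1) hpr
      have hd1 := hP2 t'.1 t'.2
      have hd2 := hP2 (par t'.1) hpr
      have htpp : t'.1 ≠ par (par t'.1) := by
        intro hh
        rw [← hh] at hd2
        omega
      have hpath : (Walk.cons h1 (Walk.cons h2 Walk.nil)).IsPath := by
        rw [Walk.cons_isPath_iff, Walk.cons_isPath_iff]
        refine ⟨⟨Walk.IsPath.nil, ?_⟩, ?_⟩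
        · rw [Walk.support_nil, List.mem_singleton]
          exact h2.ne
        · rw [Walk.support_cons, Walk.support_nil]
          intro hmem
          rcases List.mem_cons.mp hmem with hh | hh
          · exact h1.ne hh
          · rw [List.mem_singleton] at hh
            exact htpp hh
      have hjunc : J.K t'.1 ∩ J.K (par (par t'.1)) ⊆ J.K (par t'.1) :=
        J.junction t'.1 (par (par t'.1)) (par t'.1) _ hpath
          (by rw [Walk.support_cons]; simp)
      have hint : K' s' ∩ K' t' = J.K (par t'.1) := by
        rw [hs']
        simp only [hK'def]
        apply Finset.Subset.antisymm
        · intro v hv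
          rw [Finset.mem_inter, Finset.mem_union, Finset.mem_union] at hv
          rcases hv.1 with h1' | h1'
          · exact h1'
          · rcases hv.2 with h2' | h2'
            · exact hjunc (Finset.mem_inter.mpr ⟨h2', h1'⟩)
            · exact h2'
        · intro v hv
          exact Finset.mem_inter.mpr
            ⟨Finset.mem_union_left _ hv, Finset.mem_union_right _ hv⟩
      rw [hint, hK]
  -- assemble
  refine ⟨⟨{x : J.ι // x ≠ r}, inferInstance, G', ⟨hconn', hacyc'⟩, K',
    covers', junction'⟩, ⟨hcard', ?_⟩, ?_⟩
  · intro e he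
    induction e using Sym2.ind with
    | _ a b =>
      have hadj : G'.Adj a b := G'.mem_edgeSet.mp he
      have hgoal : (K' a ∩ K' b).card = k := by
        rcases hadj.2 with h | h
        · rw [Finset.inter_comm]
          exact hsepAux b a hadj.symm h
        · exact hsepAux a b hadj h
      show (K' a ∩ K' b).card = k + 1 - 1
      rw [hgoal]
      omega
  · intro t
    exact ⟨π t, fun v hv => hπK t v hv⟩
end
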